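/- arXiv:math/0106030 — 4 statements merged into one kernel-verified Lean document; each statement's English description precedes it below -/
import Mathlib

section
/- For every σ > 0, every κ ∈ ℂ with Re κ > 0, and every integer m ≥ 0, one has (1/2π) ∫_ℝ ((σ+iξ)^m/(σ−iξ)^{m+1}) · (1/(κ+iξ)) dξ = (σ−κ)^m/(σ+κ)^{m+1}. -/
open MeasureTheory Complex Filter Real

-- whole-line FTC
lemma my_integral_line {F f : ℝ → ℂ} {LP LM : ℂ}
    (hderiv : ∀ x : ℝ, HasDerivAt F (f x) x) (hint : Integrable f)
    (htop : Tendsto F atTop (nhds LP)) (hbot : Tendsto F atBot (nhds LM)) :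
    ∫ x : ℝ, f x = LP - LM := by
  have h1 := integral_Iic_of_hasDerivAt_of_tendsto' (a := 0)
    (fun x _ => hderiv x) hint.integrableOn hbot
  have h2 := integral_Ioi_of_hasDerivAt_of_tendsto' (a := 0)
    (fun x _ => hderiv x) hint.integrableOn htop
  rw [← intervalIntegral.integral_Iic_add_Ioi (b := 0) hint.integrableOn hint.integrableOn, h1, h2]
  ring

-- tendsto of inverse coercion
lemma my_inv_tendsto_top : Tendsto (fun ξ : ℝ => ((ξ : ℂ))⁻¹) atTop (nhds 0) := by
  have : Tendsto (fun ξ : ℝ => ((ξ⁻¹ : ℝ) : ℂ)) atTop (nhds ((0:ℝ):ℂ)) :=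
    (tendsto_inv_atTop_zero).ofReal
  simpa using this

lemma my_inv_tendsto_bot : Tendsto (fun ξ : ℝ => ((ξ : ℂ))⁻¹) atBot (nhds 0) := by
  have h : Tendsto (fun ξ : ℝ => (-ξ)⁻¹) atBot (nhds 0) :=
    tendsto_inv_atTop_zero.comp tendsto_neg_atBot_atTop
  have h2 : Tendsto (fun ξ : ℝ => ξ⁻¹) atBot (nhds 0) := by
    have := h.neg
    rw [neg_zero] at this
    exact this.congr fun x => by rw [inv_neg, neg_neg]
  have : Tendsto (fun ξ : ℝ => ((ξ⁻¹ : ℝ) : ℂ)) atBot (nhds ((0:ℝ):ℂ)) := h2.ofReal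
  simpa using this

-- ratio limit
lemma my_ratio_lim {l : Filter ℝ} (hinv : Tendsto (fun ξ : ℝ => ((ξ : ℂ))⁻¹) l (nhds 0))
    (hne : ∀ᶠ ξ : ℝ in l, ξ ≠ 0) (a b c d : ℂ) (hd : d ≠ 0) :
    Tendsto (fun ξ : ℝ => (a + c * ξ) / (b + d * ξ)) l (nhds (c / d)) := by
  have h : Tendsto (fun ξ : ℝ => (a * (ξ:ℂ)⁻¹ + c) / (b * (ξ:ℂ)⁻¹ + d)) l
      (nhds ((a * 0 + c) / (b * 0 + d))) := by
    exact Tendsto.div (((tendsto_const_nhds).mul hinv).add tendsto_const_nhds)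
      (((tendsto_const_nhds).mul hinv).add tendsto_const_nhds) (by simpa using hd)
  rw [show (a * 0 + c) / (b * 0 + d) = c / d by ring_nf] at h
  apply h.congr'
  filter_upwards [hne] with ξ hξ
  have hξ' : (ξ : ℂ) ≠ 0 := by exact_mod_cast hξ
  field_simp


lemma ne1' (σ : ℝ) (hσ : 0 < σ) (ξ : ℝ) : (σ : ℂ) - I * ξ ≠ 0 := by
  intro h
  have := congrArg Complex.re h
  simp at this
  exact hσ.ne' this

lemma ne2' (σ : ℝ) (hσ : 0 < σ) (ξ : ℝ) : (σ : ℂ) + I * ξ ≠ 0 := by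
  intro h
  have := congrArg Complex.re h
  simp at this
  exact hσ.ne' this

lemma ne3' (κ : ℂ) (hκ : 0 < κ.re) (ξ : ℝ) : κ + I * ξ ≠ 0 := by
  intro h
  have := congrArg Complex.re h
  simp at this
  exact hκ.ne' this

lemma ne4' (σ : ℝ) (hσ : 0 < σ) (κ : ℂ) (hκ : 0 < κ.re) : (σ : ℂ) + κ ≠ 0 := by
  intro h
  have := congrArg Complex.re h
  simp at this
  nlinarith

lemma abs_eq' (σ ξ : ℝ) : ‖(σ : ℂ) + I * ξ‖ = ‖(σ : ℂ) - I * ξ‖ := by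
  rw [show (σ : ℂ) - I * ξ = starRingEnd ℂ ((σ : ℂ) + I * ξ) by
    simp [Complex.ext_iff], Complex.norm_conj]

lemma abs_sq' (σ ξ : ℝ) : ‖(σ : ℂ) - I * ξ‖ ^ 2 = σ ^ 2 + ξ ^ 2 := by
  rw [Complex.sq_norm, Complex.normSq_apply]
  simp
  ring

lemma integrable_aux (σ : ℝ) (hσ : 0 < σ) : Integrable fun ξ : ℝ => (σ ^ 2 + ξ ^ 2)⁻¹ := by
  have hb : Integrable fun ξ : ℝ => (σ⁻¹ ^ 2 + 1) * (1 + ξ ^ 2)⁻¹ :=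
    integrable_inv_one_add_sq.const_mul _
  refine hb.mono' ?_ ?_
  · exact (Continuous.inv₀ (by continuity) (fun ξ => by positivity)).aestronglyMeasurable
  · refine Filter.Eventually.of_forall fun ξ => ?_
    have h1 : (0:ℝ) < σ ^ 2 + ξ ^ 2 := by positivity
    rw [Real.norm_eq_abs, abs_of_pos (by positivity)]
    rw [inv_le_iff_one_le_mul₀ h1]
    have key : (1:ℝ) + ξ ^ 2 ≤ (σ⁻¹ ^ 2 + 1) * (σ ^ 2 + ξ ^ 2) := by
      have hσ2 : σ⁻¹ ^ 2 * σ ^ 2 = 1 := by field_simp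
      nlinarith [sq_nonneg ξ, sq_nonneg σ]
    calc (1:ℝ) = (1 + ξ^2) * (1 + ξ^2)⁻¹ := by field_simp
      _ ≤ (σ⁻¹ ^ 2 + 1) * (σ ^ 2 + ξ ^ 2) * (1+ξ^2)⁻¹ :=
          mul_le_mul_of_nonneg_right key (by positivity)
      _ = (σ⁻¹ ^ 2 + 1) * (1+ξ^2)⁻¹ * (σ ^ 2 + ξ ^ 2) := by ring

lemma norm_g (σ : ℝ) (hσ : 0 < σ) (m : ℕ) (ξ : ℝ) :
    ‖((σ : ℂ) + I * ξ) ^ m / ((σ : ℂ) - I * ξ) ^ (m + 2)‖ = (σ ^ 2 + ξ ^ 2)⁻¹ := by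
  have hA : (0:ℝ) < ‖(σ : ℂ) - I * ξ‖ := norm_pos_iff.mpr (ne1' σ hσ ξ)
  rw [norm_div, norm_pow, norm_pow, abs_eq', pow_add,
    div_mul_eq_div_div, div_self (pow_ne_zero _ hA.ne'), one_div, ← abs_sq']

lemma integrable_g (σ : ℝ) (hσ : 0 < σ) (m : ℕ) :
    Integrable fun ξ : ℝ => ((σ : ℂ) + I * ξ) ^ m / ((σ : ℂ) - I * ξ) ^ (m + 2) := by
  refine (integrable_aux σ hσ).mono' ?_ ?_
  · apply Continuous.aestronglyMeasurable
    exact (Continuous.pow (by continuity) m).div (Continuous.pow (by continuity) (m+2))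
      (fun ξ => pow_ne_zero _ (ne1' σ hσ ξ))
  · exact Filter.Eventually.of_forall fun ξ => le_of_eq (norm_g σ hσ m ξ)

lemma abs_sq'' (κ : ℂ) (ξ : ℝ) : ‖κ + I * ξ‖ ^ 2 = κ.re ^ 2 + (ξ + κ.im) ^ 2 := by
  rw [Complex.sq_norm, Complex.normSq_apply]
  simp
  ring

lemma integrable_aux2 (κ : ℂ) (hκ : 0 < κ.re) :
    Integrable fun ξ : ℝ => (κ.re ^ 2 + (ξ + κ.im) ^ 2)⁻¹ := by
  have h0 := integrable_aux κ.re hκ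
  have hmp : MeasurePreserving (fun ξ : ℝ => ξ + κ.im) volume volume :=
    measurePreserving_add_right volume κ.im
  exact hmp.integrable_comp_emb (MeasurableEquiv.addRight κ.im).measurableEmbedding |>.mpr h0

lemma norm_f (σ : ℝ) (hσ : 0 < σ) (κ : ℂ) (hκ : 0 < κ.re) (m : ℕ) (ξ : ℝ) :
    ‖(((σ : ℂ) + I * ξ) ^ m / ((σ : ℂ) - I * ξ) ^ (m + 1)) * (1 / (κ + I * ξ))‖
      = (‖(σ : ℂ) - I * ξ‖ * ‖κ + I * ξ‖)⁻¹ := by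
  have hA : (0:ℝ) < ‖(σ : ℂ) - I * ξ‖ := norm_pos_iff.mpr (ne1' σ hσ ξ)
  rw [norm_mul, norm_div, norm_div, norm_pow, norm_pow, norm_one, abs_eq',
    pow_succ, div_mul_eq_div_div, div_self (pow_ne_zero _ hA.ne'), one_div, one_div, ← mul_inv]

lemma integrable_f (σ : ℝ) (hσ : 0 < σ) (κ : ℂ) (hκ : 0 < κ.re) (m : ℕ) :
    Integrable fun ξ : ℝ =>
      (((σ : ℂ) + I * ξ) ^ m / ((σ : ℂ) - I * ξ) ^ (m + 1)) * (1 / (κ + I * ξ)) := by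
  have hb : Integrable fun ξ : ℝ =>
      (2:ℝ)⁻¹ * ((σ ^ 2 + ξ ^ 2)⁻¹ + (κ.re ^ 2 + (ξ + κ.im) ^ 2)⁻¹) :=
    ((integrable_aux σ hσ).add (integrable_aux2 κ hκ)).const_mul _
  refine hb.mono' ?_ ?_
  · apply Continuous.aestronglyMeasurable
    apply Continuous.mul
    · exact (Continuous.pow (by continuity) m).div (Continuous.pow (by continuity) (m+1))
        (fun ξ => pow_ne_zero _ (ne1' σ hσ ξ))
    · exact continuous_const.div (by continuity) (fun ξ => ne3' κ hκ ξ)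
  · refine Filter.Eventually.of_forall fun ξ => ?_
    rw [norm_f σ hσ κ hκ m ξ]
    have hA : (0:ℝ) < ‖(σ : ℂ) - I * ξ‖ := norm_pos_iff.mpr (ne1' σ hσ ξ)
    have hB : (0:ℝ) < ‖κ + I * ξ‖ := norm_pos_iff.mpr (ne3' κ hκ ξ)
    rw [← abs_sq' σ ξ, ← abs_sq'' κ ξ]
    set A := ‖(σ : ℂ) - I * ξ‖
    set B := ‖κ + I * ξ‖
    have hkey : (2:ℝ)⁻¹ * ((A^2)⁻¹ + (B^2)⁻¹) - (A * B)⁻¹ = (A - B)^2 / (2 * A^2 * B^2) := by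
      field_simp
      ring
    nlinarith [div_nonneg (sq_nonneg (A - B)) (by positivity : (0:ℝ) ≤ 2 * A^2 * B^2), hkey]

lemma hasDerivAt_num (σ : ℝ) (ξ : ℝ) :
    HasDerivAt (fun ξ : ℝ => (σ : ℂ) + I * ξ) I ξ := by
  simpa using ((Complex.ofRealCLM.hasDerivAt (x := ξ)).const_mul I).const_add (σ : ℂ)

lemma hasDerivAt_den (σ : ℝ) (ξ : ℝ) :
    HasDerivAt (fun ξ : ℝ => (σ : ℂ) - I * ξ) (-I) ξ := by
  simpa using ((Complex.ofRealCLM.hasDerivAt (x := ξ)).const_mul I).const_sub (σ : ℂ)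

lemma ratio_tendsto_g (σ : ℝ) {l : Filter ℝ}
    (hinv : Tendsto (fun ξ : ℝ => ((ξ : ℂ))⁻¹) l (nhds 0)) (hne : ∀ᶠ ξ : ℝ in l, ξ ≠ 0) :
    Tendsto (fun ξ : ℝ => ((σ : ℂ) + I * ξ) / ((σ : ℂ) - I * ξ)) l (nhds (-1)) := by
  have h := my_ratio_lim hinv hne (σ : ℂ) (σ : ℂ) I (-I) (by simp [I_ne_zero])
  have he : I / (-I) = -1 := by
    field_simp
  rw [he] at h
  exact h.congr fun ξ => by ring_nf

lemma my_hasDerivAt_pow {w : ℝ → ℂ} {w' : ℂ} {x : ℝ} (h : HasDerivAt w w' x) (n : ℕ) :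
    HasDerivAt (fun t => w t ^ n) ((n : ℂ) * w x ^ (n - 1) * w') x := by
  induction n with
  | zero =>
    simp only [pow_zero, Nat.cast_zero, zero_mul]
    exact hasDerivAt_const x 1
  | succ n ih =>
    have : HasDerivAt (fun t => w t ^ n * w t) (↑n * w x ^ (n - 1) * w' * w x + w x ^ n * w') x :=
      ih.mul h
    have heq : (fun t => w t ^ n * w t) = fun t => w t ^ (n + 1) := by
      funext t
      rw [← pow_succ]
    rw [heq] at this
    convert this using 1
    cases n with
    | zero => simp
    | succ k =>
      simp only [Nat.add_sub_cancel]
      push_cast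
      rw [pow_succ]
      ring

lemma int_g_zero (σ : ℝ) (hσ : 0 < σ) (m : ℕ) :
    ∫ ξ : ℝ, ((σ : ℂ) + I * ξ) ^ m / ((σ : ℂ) - I * ξ) ^ (m + 2) = 0 := by
  set c : ℂ := (2 * σ * (m + 1) * I)⁻¹ with hc
  set F : ℝ → ℂ := fun ξ => c * (((σ : ℂ) + I * ξ) / ((σ : ℂ) - I * ξ)) ^ (m + 1) with hF
  have hderiv : ∀ ξ : ℝ, HasDerivAt F
      (((σ : ℂ) + I * ξ) ^ m / ((σ : ℂ) - I * ξ) ^ (m + 2)) ξ := by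
    intro ξ
    have hdiv := (hasDerivAt_num σ ξ).div (hasDerivAt_den σ ξ) (ne1' σ hσ ξ)
    have hpow := (my_hasDerivAt_pow hdiv (m + 1)).const_mul c
    refine hpow.congr_deriv (Eq.symm ?_)
    have h1 := ne1' σ hσ ξ
    have hm : ((m:ℂ) + 1) ≠ 0 := Nat.cast_add_one_ne_zero m
    have hσ' : (σ : ℂ) ≠ 0 := by exact_mod_cast hσ.ne'
    have h2 : I * ((σ:ℂ) - I * ξ) - ((σ:ℂ) + I * ξ) * (-I) = 2 * σ * I := by ring
    rw [hc]
    simp only [Nat.add_sub_cancel, Pi.div_apply, div_pow, h2]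
    rw [inv_mul_eq_div, eq_div_iff (by
      simp only [ne_eq, mul_eq_zero, I_ne_zero, or_false, OfNat.ofNat_ne_zero, false_or]
      push_cast
      exact fun h => h.elim hσ' hm)]
    push_cast
    field_simp
    ring
  have hlim_top : Tendsto F atTop (nhds (c * (-1) ^ (m + 1))) := by
    exact tendsto_const_nhds.mul
      ((ratio_tendsto_g σ my_inv_tendsto_top (eventually_ne_atTop 0)).pow (m + 1))
  have hlim_bot : Tendsto F atBot (nhds (c * (-1) ^ (m + 1))) := by
    exact tendsto_const_nhds.mul
      ((ratio_tendsto_g σ my_inv_tendsto_bot (eventually_ne_atBot 0)).pow (m + 1))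
  rw [my_integral_line hderiv (integrable_g σ hσ m) hlim_top hlim_bot, sub_self]


lemma T_top (r : ℝ) : Tendsto (fun u : ℝ => u / Real.sqrt (r ^ 2 + u ^ 2)) atTop (nhds 1) := by
  have hi : Tendsto (fun u : ℝ => (u ^ 2)⁻¹) atTop (nhds 0) :=
    tendsto_inv_atTop_zero.comp (tendsto_pow_atTop (n := 2) (by norm_num))
  have h0 : Tendsto (fun u : ℝ => r ^ 2 / u ^ 2) atTop (nhds 0) := by
    have := hi.const_mul (r ^ 2)
    simpa [div_eq_mul_inv] using this
  have h1 : Tendsto (fun u : ℝ => (Real.sqrt (r ^ 2 / u ^ 2 + 1))⁻¹) atTop (nhds 1) := by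
    have h2 : Tendsto (fun u : ℝ => Real.sqrt (r ^ 2 / u ^ 2 + 1)) atTop (nhds 1) := by
      have h3 : Tendsto (fun u : ℝ => r ^ 2 / u ^ 2 + 1) atTop (nhds 1) := by
        simpa using h0.add_const 1
      have := (Real.continuous_sqrt.tendsto 1).comp h3
      simpa [Function.comp_def] using this
    simpa using h2.inv₀ one_ne_zero
  apply h1.congr'
  filter_upwards [eventually_gt_atTop (0:ℝ)] with u hu
  have hs : Real.sqrt (r ^ 2 + u ^ 2) = u * Real.sqrt (r ^ 2 / u ^ 2 + 1) := by
    rw [← Real.sqrt_sq hu.le, ← Real.sqrt_mul (sq_nonneg u)]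
    congr 1
    field_simp
    exact Real.sq_sqrt (sq_nonneg u)
  rw [hs, div_mul_eq_div_div, div_self hu.ne', one_div]

lemma T_bot (r : ℝ) : Tendsto (fun u : ℝ => u / Real.sqrt (r ^ 2 + u ^ 2)) atBot (nhds (-1)) := by
  have h2 : Tendsto (fun u : ℝ => -((-u) / Real.sqrt (r ^ 2 + (-u) ^ 2))) atBot (nhds (-1)) := by
    have := ((T_top r).comp tendsto_neg_atBot_atTop).neg
    simpa using this
  apply h2.congr
  intro u
  rw [neg_div, neg_neg, neg_pow, Even.neg_one_pow (by norm_num), one_mul]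

lemma abs_val (b : ℂ) (ξ : ℝ) :
    ‖b + I * ξ‖ = Real.sqrt (b.re ^ 2 + (ξ + b.im) ^ 2) := by
  rw [← abs_sq'' b ξ, Real.sqrt_sq (norm_nonneg _)]

lemma S_top (b : ℂ) :
    Tendsto (fun ξ : ℝ => (b.im + ξ) / ‖b + I * ξ‖) atTop (nhds 1) := by
  have h := (T_top b.re).comp (tendsto_atTop_add_const_right atTop b.im tendsto_id)
  apply h.congr
  intro ξ
  simp only [Function.comp_apply, id_eq]
  rw [abs_val, add_comm b.im ξ]

lemma S_bot (b : ℂ) :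
    Tendsto (fun ξ : ℝ => (b.im + ξ) / ‖b + I * ξ‖) atBot (nhds (-1)) := by
  have h := (T_bot b.re).comp (tendsto_atBot_add_const_right atBot b.im tendsto_id)
  apply h.congr
  intro ξ
  simp only [Function.comp_apply, id_eq]
  rw [abs_val, add_comm b.im ξ]

lemma arg_form (b : ℂ) (hb : 0 ≤ b.re) (ξ : ℝ) :
    (b + I * ξ).arg = Real.arcsin ((b.im + ξ) / ‖b + I * ξ‖) := by
  rw [Complex.arg_of_re_nonneg (by simpa using hb)]
  congr 1
  simp

lemma arg_top (b : ℂ) (hb : 0 ≤ b.re) :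
    Tendsto (fun ξ : ℝ => (b + I * ξ).arg) atTop (nhds (π / 2)) := by
  have h := (Real.continuous_arcsin.tendsto 1).comp (S_top b)
  rw [Real.arcsin_one] at h
  exact h.congr fun ξ => (arg_form b hb ξ).symm

lemma arg_bot (b : ℂ) (hb : 0 ≤ b.re) :
    Tendsto (fun ξ : ℝ => (b + I * ξ).arg) atBot (nhds (-(π / 2))) := by
  have h := (Real.continuous_arcsin.tendsto (-1)).comp (S_bot b)
  rw [Real.arcsin_neg_one] at h
  exact h.congr fun ξ => (arg_form b hb ξ).symm

lemma arg_top' (σ : ℝ) (hσ : 0 ≤ σ) :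
    Tendsto (fun ξ : ℝ => ((σ : ℂ) - I * ξ).arg) atTop (nhds (-(π / 2))) := by
  have h := (arg_bot (σ : ℂ) (by simpa using hσ)).comp tendsto_neg_atTop_atBot
  apply h.congr
  intro ξ
  simp only [Function.comp_apply]
  norm_num [sub_eq_add_neg, mul_comm]

lemma arg_bot' (σ : ℝ) (hσ : 0 ≤ σ) :
    Tendsto (fun ξ : ℝ => ((σ : ℂ) - I * ξ).arg) atBot (nhds (π / 2)) := by
  have h := (arg_top (σ : ℂ) (by simpa using hσ)).comp tendsto_neg_atBot_atTop
  apply h.congr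
  intro ξ
  simp only [Function.comp_apply]
  norm_num [sub_eq_add_neg, mul_comm]

lemma hasDerivAt_num2 (b : ℂ) (ξ : ℝ) :
    HasDerivAt (fun ξ : ℝ => b + I * ξ) I ξ := by
  simpa using ((Complex.ofRealCLM.hasDerivAt (x := ξ)).const_mul I).const_add b

lemma log_split (z w : ℂ) :
    (↑(Real.log ‖z‖ - Real.log ‖w‖) : ℂ) + ↑(z.arg - w.arg) * I
      = Complex.log z - Complex.log w := by
  apply Complex.ext <;>
    simp [Complex.log_re, Complex.log_im]

lemma L_re_top (σ : ℝ) (hσ : 0 < σ) (κ : ℂ) (hκ : 0 < κ.re) {l : Filter ℝ}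
    (hinv : Tendsto (fun ξ : ℝ => ((ξ : ℂ))⁻¹) l (nhds 0)) (hne : ∀ᶠ ξ : ℝ in l, ξ ≠ 0) :
    Tendsto (fun ξ : ℝ =>
      Real.log (‖(σ : ℂ) - I * ξ‖) - Real.log (‖κ + I * ξ‖)) l
      (nhds 0) := by
  have hr : Tendsto (fun ξ : ℝ => ((σ : ℂ) - I * ξ) / (κ + I * ξ)) l (nhds (-1)) := by
    have h := my_ratio_lim hinv hne (σ : ℂ) κ (-I) I I_ne_zero
    have he : (-I) / I = -1 := by field_simp
    rw [he] at h
    exact h.congr fun ξ => by ring_nf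
  have habs := (continuous_norm.tendsto (-1)).comp hr
  rw [show ‖(-1:ℂ)‖ = 1 by simp] at habs
  have hlog := (Real.continuousAt_log one_ne_zero).tendsto.comp habs
  rw [Real.log_one] at hlog
  apply hlog.congr
  intro ξ
  simp only [Function.comp_apply]
  rw [norm_div, Real.log_div (norm_ne_zero_iff.mpr (ne1' σ hσ ξ))
    (norm_ne_zero_iff.mpr (ne3' κ hκ ξ))]

lemma L_top (σ : ℝ) (hσ : 0 < σ) (κ : ℂ) (hκ : 0 < κ.re) :
    Tendsto (fun ξ : ℝ => Complex.log ((σ : ℂ) - I * ξ) - Complex.log (κ + I * ξ)) atTop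
      (nhds (-(π : ℝ) * I)) := by
  have hre := L_re_top σ hσ κ hκ my_inv_tendsto_top (eventually_ne_atTop 0)
  have him : Tendsto (fun ξ : ℝ => ((σ : ℂ) - I * ξ).arg - (κ + I * ξ).arg) atTop
      (nhds (-π)) := by
    have h := (arg_top' σ hσ.le).sub (arg_top κ hκ.le)
    have h2 : -(π / 2) - π / 2 = -π := by ring
    rw [h2] at h
    exact h
  have hcomb := (hre.ofReal).add ((him.ofReal).mul_const I)
  have : ((0:ℝ) : ℂ) + ((-π : ℝ) : ℂ) * I = -(π:ℝ) * I := by push_cast; ring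
  rw [this] at hcomb
  exact hcomb.congr fun ξ => log_split _ _

lemma L_bot (σ : ℝ) (hσ : 0 < σ) (κ : ℂ) (hκ : 0 < κ.re) :
    Tendsto (fun ξ : ℝ => Complex.log ((σ : ℂ) - I * ξ) - Complex.log (κ + I * ξ)) atBot
      (nhds ((π : ℝ) * I)) := by
  have hre := L_re_top σ hσ κ hκ my_inv_tendsto_bot (eventually_ne_atBot 0)
  have him : Tendsto (fun ξ : ℝ => ((σ : ℂ) - I * ξ).arg - (κ + I * ξ).arg) atBot
      (nhds π) := by
    have := (arg_bot' σ hσ.le).sub (arg_bot κ hκ.le)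
    have h2 : π / 2 - -(π / 2) = π := by ring
    rw [h2] at this
    exact this
  have hcomb := (hre.ofReal).add ((him.ofReal).mul_const I)
  have : ((0:ℝ) : ℂ) + ((π : ℝ) : ℂ) * I = (π:ℝ) * I := by push_cast; ring
  rw [this] at hcomb
  exact hcomb.congr fun ξ => log_split _ _

lemma base_integral (σ : ℝ) (hσ : 0 < σ) (κ : ℂ) (hκ : 0 < κ.re) :
    ∫ ξ : ℝ, (((σ : ℂ) + I * ξ) ^ 0 / ((σ : ℂ) - I * ξ) ^ (0 + 1)) * (1 / (κ + I * ξ))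
      = 2 * (π : ℂ) / ((σ : ℂ) + κ) := by
  set F : ℝ → ℂ := fun ξ =>
    (I / ((σ : ℂ) + κ)) * (Complex.log ((σ : ℂ) - I * ξ) - Complex.log (κ + I * ξ)) with hF
  have hderiv : ∀ ξ : ℝ, HasDerivAt F
      ((((σ : ℂ) + I * ξ) ^ 0 / ((σ : ℂ) - I * ξ) ^ (0 + 1)) * (1 / (κ + I * ξ))) ξ := by
    intro ξ
    have hlog1 : HasDerivAt (fun ξ : ℝ => Complex.log ((σ : ℂ) - I * ξ))
        ((-I) / ((σ : ℂ) - I * ξ)) ξ :=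
      (hasDerivAt_den σ ξ).clog_real (by
        rw [Complex.mem_slitPlane_iff]
        left
        simpa using hσ)
    have hlog2 : HasDerivAt (fun ξ : ℝ => Complex.log (κ + I * ξ))
        (I / (κ + I * ξ)) ξ :=
      (hasDerivAt_num2 κ ξ).clog_real (by
        rw [Complex.mem_slitPlane_iff]
        left
        simpa using hκ)
    have hd := (hlog1.sub hlog2).const_mul (I / ((σ : ℂ) + κ))
    refine hd.congr_deriv (Eq.symm ?_)
    have h1 := ne1' σ hσ ξ
    have h3 := ne3' κ hκ ξ
    have h4 := ne4' σ hσ κ hκ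
    field_simp
    linear_combination ((σ:ℂ) + κ) * ((σ:ℂ) - I * ξ) * Complex.I_sq
  have hFt : Tendsto F atTop (nhds ((I / ((σ : ℂ) + κ)) * (-(π:ℝ) * I))) :=
    tendsto_const_nhds.mul (L_top σ hσ κ hκ)
  have hFb : Tendsto F atBot (nhds ((I / ((σ : ℂ) + κ)) * ((π:ℝ) * I))) :=
    tendsto_const_nhds.mul (L_bot σ hσ κ hκ)
  rw [my_integral_line hderiv (integrable_f σ hσ κ hκ 0) hFt hFb]
  have hnum : I * (-(π:ℝ) * I) - I * ((π:ℝ) * I) = 2 * (π:ℂ) := by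
    ring_nf
    rw [Complex.I_sq]
    push_cast
    ring
  calc I / ((σ:ℂ) + κ) * (-(π:ℝ) * I) - I / ((σ:ℂ) + κ) * ((π:ℝ) * I)
      = (I * (-(π:ℝ) * I) - I * ((π:ℝ) * I)) / ((σ:ℂ) + κ) := by ring
    _ = 2 * (π:ℂ) / ((σ:ℂ) + κ) := by rw [hnum]

lemma key_integral (σ : ℝ) (hσ : 0 < σ) (κ : ℂ) (hκ : 0 < κ.re) (m : ℕ) :
    ∫ ξ : ℝ, (((σ : ℂ) + I * ξ) ^ m / ((σ : ℂ) - I * ξ) ^ (m + 1)) * (1 / (κ + I * ξ))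
      = 2 * (π : ℂ) * ((σ : ℂ) - κ) ^ m / ((σ : ℂ) + κ) ^ (m + 1) := by
  induction m with
  | zero => rw [base_integral σ hσ κ hκ]; simp
  | succ n ih =>
    have h4 := ne4' σ hσ κ hκ
    have hpt : ∀ ξ : ℝ,
        (((σ : ℂ) + I * ξ) ^ (n+1) / ((σ : ℂ) - I * ξ) ^ (n+1+1)) * (1 / (κ + I * ξ))
        = (((σ : ℂ) - κ) / ((σ : ℂ) + κ)) *
            ((((σ : ℂ) + I * ξ) ^ n / ((σ : ℂ) - I * ξ) ^ (n+1)) * (1 / (κ + I * ξ)))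
          + (2 * σ / ((σ : ℂ) + κ)) *
            (((σ : ℂ) + I * ξ) ^ n / ((σ : ℂ) - I * ξ) ^ (n+2)) := by
      intro ξ
      have h1 := ne1' σ hσ ξ
      have h3 := ne3' κ hκ ξ
      have h1n : ((σ:ℂ) - I * ξ) ^ n ≠ 0 := pow_ne_zero _ h1
      have h1two : ((σ:ℂ) - I * ξ) ^ 2 ≠ 0 := pow_ne_zero _ h1
      rw [show n + 1 + 1 = n + 2 from rfl, pow_succ ((σ:ℂ) + I * ξ) n,
        show ((σ:ℂ) - I * ξ) ^ (n + 1) = ((σ:ℂ) - I * ξ) ^ n * ((σ:ℂ) - I * ξ) from pow_succ _ n,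
        show ((σ:ℂ) - I * ξ) ^ (n + 2) = ((σ:ℂ) - I * ξ) ^ n * ((σ:ℂ) - I * ξ) ^ 2 from pow_add _ n 2]
      rw [mul_one_div, div_div, mul_one_div, div_div, div_mul_div_comm, div_mul_div_comm,
        div_add_div _ _ (mul_ne_zero h4 (mul_ne_zero (mul_ne_zero h1n h1) h3))
          (mul_ne_zero h4 (mul_ne_zero h1n h1two)),
        div_eq_div_iff (mul_ne_zero (mul_ne_zero h1n h1two) h3)
          (mul_ne_zero (mul_ne_zero h4 (mul_ne_zero (mul_ne_zero h1n h1) h3))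
            (mul_ne_zero h4 (mul_ne_zero h1n h1two)))]
      ring
    rw [integral_congr_ae (Filter.Eventually.of_forall fun ξ => hpt ξ)]
    rw [integral_add ((integrable_f σ hσ κ hκ n).const_mul _)
      ((integrable_g σ hσ n).const_mul _), integral_const_mul, integral_const_mul,
      int_g_zero σ hσ n, mul_zero, add_zero, ih]
    have h4p : ((σ:ℂ) + κ) ^ (n + 1) ≠ 0 := pow_ne_zero _ h4
    field_simp
    ring

/-- Base case (j = 1) of Lemma 3.2: residue computation of the Laguerre-type integral. -/
theorem laguerre_integral_simple_pole (σ : ℝ) (hσ : 0 < σ) (κ : ℂ) (hκ : 0 < κ.re) (m : ℕ) :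
    (1 / (2 * (Real.pi : ℂ))) *
      ∫ ξ : ℝ, (((σ : ℂ) + I * ξ) ^ m / ((σ : ℂ) - I * ξ) ^ (m + 1)) * (1 / (κ + I * ξ)) =
    ((σ : ℂ) - κ) ^ m / ((σ : ℂ) + κ) ^ (m + 1) := by
  rw [key_integral σ hσ κ hκ m]
  have hπ : ((π : ℝ) : ℂ) ≠ 0 := Complex.ofReal_ne_zero.mpr Real.pi_ne_zero
  have h4 : ((σ : ℂ) + κ) ^ (m+1) ≠ 0 := pow_ne_zero _ (ne4' σ hσ κ hκ)
  field_simp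
end

section
/- For all integers l > m ≥ 0, every integer j ≥ 1, every σ > 0, and every κ ∈ ℂ with Re κ > 0: (1/2π) ∫_ℝ ((σ−iξ)^l/(σ+iξ)^{l+1}) · ((σ+iξ)^m/(σ−iξ)^{m+1}) · (κ+iξ)^{−j} dξ = 0. -/
open MeasureTheory Complex

open Set FourierTransform Real

lemma norm_aux (n : ℕ) (b : ℂ) (t : ℝ) (ht : 0 ≤ t) :
    ‖(t:ℂ)^n * Complex.exp (-(b*↑t))‖ = t^n * Real.exp (-(b.re*t)) := by
  rw [norm_mul, norm_pow, Complex.norm_exp]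
  simp [Complex.norm_real, _root_.abs_of_nonneg ht]

lemma laplace_integrable (n : ℕ) (b : ℂ) (hb : 0 < b.re) :
    IntegrableOn (fun (t:ℝ) => (t:ℂ)^n * Complex.exp (-(b*↑t))) (Ioi 0) := by
  have h := integrableOn_rpow_mul_exp_neg_mul_rpow (s := (n:ℝ)) (p := 1) (b := b.re)
    (lt_of_lt_of_le neg_one_lt_zero (Nat.cast_nonneg n)) zero_lt_one hb
  refine (h.mono' ?_ ?_)
  · exact (Continuous.aestronglyMeasurable (by continuity)).restrict
  · filter_upwards [ae_restrict_mem measurableSet_Ioi] with t ht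
    rw [norm_aux n b t (le_of_lt ht), Real.rpow_one, Real.rpow_natCast]
    simp [neg_mul]

lemma tendsto_aux (n : ℕ) (b : ℂ) (hb : 0 < b.re) :
    Filter.Tendsto (fun (t:ℝ) => (t:ℂ)^n * Complex.exp (-(b*↑t))) Filter.atTop (nhds 0) := by
  rw [tendsto_zero_iff_norm_tendsto_zero]
  have h1 : Filter.Tendsto (fun (t:ℝ) => (b.re)⁻¹^n * ((b.re*t)^n * Real.exp (-(b.re*t))))
      Filter.atTop (nhds 0) := by
    have := (Real.tendsto_pow_mul_exp_neg_atTop_nhds_zero n).comp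
      (Filter.tendsto_id.const_mul_atTop hb)
    simpa using this.const_mul ((b.re)⁻¹^n)
  apply h1.congr'
  filter_upwards [Filter.eventually_ge_atTop (0:ℝ)] with t ht
  rw [norm_aux n b t ht, ← mul_assoc, ← mul_pow, inv_mul_cancel_left₀ hb.ne']

lemma hasDerivAt_aux (n : ℕ) (b : ℂ) (hb0 : b ≠ 0) (t : ℝ) :
    HasDerivAt (fun (t:ℝ) => (-b⁻¹) * ((t:ℂ)^(n+1) * Complex.exp (-(b*↑t))))
      ((t:ℂ)^(n+1) * Complex.exp (-(b*↑t)) - ((n+1:ℕ):ℂ)/b * ((t:ℂ)^n * Complex.exp (-(b*↑t)))) t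
      := by
  have h1 : HasDerivAt (fun (z:ℂ) => z^(n+1)) (((n+1:ℕ):ℂ)*(t:ℂ)^n) (t:ℂ) := hasDerivAt_pow (n+1) _
  have h2 : HasDerivAt (fun (z:ℂ) => Complex.exp (-(b*z))) (Complex.exp (-(b*(t:ℂ))) * (-b)) (t:ℂ) :=
    by simpa using (((hasDerivAt_id (t:ℂ)).const_mul b).neg).cexp
  have h3 := ((h1.mul h2).const_mul (-b⁻¹)).comp_ofReal
  convert h3 using 1
  · rfl
  · field_simp
    ring

lemma laplace (n : ℕ) (b : ℂ) (hb : 0 < b.re) :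
    ∫ t in Ioi (0:ℝ), (t:ℂ)^n * Complex.exp (-(b*↑t)) = (n.factorial : ℂ) / b^(n+1) := by
  induction n generalizing b hb with
  | zero =>
    have hd : ∀ t ∈ Ici (0:ℝ), HasDerivAt (fun (t:ℝ) => (-b⁻¹) * Complex.exp (-(b*↑t)))
        ((t:ℂ)^0 * Complex.exp (-(b*↑t))) t := by
      intro t _
      have := ((((hasDerivAt_id (t:ℂ)).const_mul b).neg).cexp).const_mul (-b⁻¹)
      have h2 := this.comp_ofReal
      have hb0 : b ≠ 0 := fun h => by simp [h] at hb
      convert h2 using 1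
      · rfl
      · simp only [Pi.neg_apply, id]
        field_simp
    have := integral_Ioi_of_hasDerivAt_of_tendsto' hd
      (by simpa using laplace_integrable 0 b hb)
      (by simpa using (tendsto_aux 0 b hb).const_mul (-b⁻¹))
    simp at this ⊢
    rw [this]
  | succ n ih =>
    have hd : ∀ t ∈ Ici (0:ℝ), HasDerivAt (fun (t:ℝ) => (-b⁻¹) * ((t:ℂ)^(n+1) * Complex.exp (-(b*↑t))))
        ((t:ℂ)^(n+1) * Complex.exp (-(b*↑t)) - ((n+1:ℕ):ℂ)/b * ((t:ℂ)^n * Complex.exp (-(b*↑t)))) t :=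
      fun t _ => hasDerivAt_aux n b (fun h => by simp [h] at hb) t
    have hint : IntegrableOn (fun (t:ℝ) => (t:ℂ)^(n+1) * Complex.exp (-(b*↑t))
        - ((n+1:ℕ):ℂ)/b * ((t:ℂ)^n * Complex.exp (-(b*↑t)))) (Ioi 0) :=
      (laplace_integrable (n+1) b hb).sub ((laplace_integrable n b hb).const_mul _)
    have htend : Filter.Tendsto (fun (t:ℝ) => (-b⁻¹) * ((t:ℂ)^(n+1) * Complex.exp (-(b*↑t))))
        Filter.atTop (nhds 0) := by simpa using (tendsto_aux (n+1) b hb).const_mul (-b⁻¹)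
    have key := integral_Ioi_of_hasDerivAt_of_tendsto' hd hint htend
    rw [integral_sub (laplace_integrable (n+1) b hb) ((laplace_integrable n b hb).const_mul _),
      integral_const_mul, ih b hb] at key
    simp at key
    rw [sub_eq_zero] at key
    rw [key]
    have hb0 : b ≠ 0 := fun h => by simp [h] at hb
    field_simp
    rw [Nat.factorial_succ]
    push_cast
    ring

lemma abs_sq_aux (σ a ξ : ℝ) : ‖(σ:ℂ) + a*ξ*I‖^2 = σ^2 + a^2*ξ^2 := by
  rw [Complex.sq_norm, Complex.normSq_apply]
  simp
  ring

lemma integrable_inv_pow (q : ℕ) (σ a : ℝ) (hσ : 0 < σ) (ha : a ≠ 0) :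
    Integrable (fun (ξ:ℝ) => (((σ:ℂ) + a*ξ*I)^(q+2))⁻¹) := by
  have hne : ∀ ξ:ℝ, (σ:ℂ) + a*ξ*I ≠ 0 := by
    intro ξ h
    have := congrArg Complex.re h
    simp at this
    exact hσ.ne' this
  have hcont : Continuous (fun (ξ:ℝ) => (((σ:ℂ) + a*ξ*I)^(q+2))⁻¹) := by
    apply Continuous.inv₀
    · fun_prop
    · exact fun ξ => pow_ne_zero _ (hne ξ)
  set K : ℝ := (σ^q * min (σ^2) (a^2))⁻¹ with hK
  have hminpos : 0 < min (σ^2) (a^2) := lt_min (by positivity) (by positivity)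
  refine (integrable_inv_one_add_sq.const_mul K).mono' hcont.aestronglyMeasurable ?_
  refine Filter.Eventually.of_forall (fun ξ => ?_)
  set r : ℝ := ‖(σ:ℂ) + a*ξ*I‖ with hr
  have hr2 : r^2 = σ^2 + a^2*ξ^2 := abs_sq_aux σ a ξ
  have hrσ : σ ≤ r := by nlinarith [sq_nonneg (a*ξ), norm_nonneg ((σ:ℂ) + a*ξ*I)]
  have hrpos : 0 < r := lt_of_lt_of_le hσ hrσ
  have h1 : (1+ξ^2) * (σ^q * min (σ^2) (a^2)) ≤ r^(q+2) := by
    have hq : σ^q ≤ r^q := pow_le_pow_left₀ hσ.le hrσ q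
    have h2 : (1+ξ^2) * min (σ^2) (a^2) ≤ r^2 := by
      have := min_le_left (σ^2) (a^2)
      have := min_le_right (σ^2) (a^2)
      nlinarith [sq_nonneg ξ]
    calc (1+ξ^2) * (σ^q * min (σ^2) (a^2)) = σ^q * ((1+ξ^2) * min (σ^2) (a^2)) := by ring
      _ ≤ r^q * r^2 := by
          apply mul_le_mul hq h2 (by positivity) (by positivity)
      _ = r^(q+2) := by ring
  have hnorm : ‖(((σ:ℂ) + a*ξ*I)^(q+2))⁻¹‖ = (r^(q+2))⁻¹ := by
    rw [norm_inv, norm_pow]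
  rw [hnorm]
  have hpos1 : (0:ℝ) < (1+ξ^2) * (σ^q * min (σ^2) (a^2)) := by positivity
  calc (r^(q+2))⁻¹ ≤ ((1+ξ^2) * (σ^q * min (σ^2) (a^2)))⁻¹ :=
        inv_anti₀ hpos1 h1
    _ = K * (1+ξ^2)⁻¹ := by rw [hK, mul_inv]; ring

lemma fourier_vanish (q : ℕ) (σ : ℝ) (hσ : 0 < σ) (s : ℝ) (hs : 0 < s) :
    ∫ ξ:ℝ, Complex.exp (-(I*ξ*s)) * (((σ:ℂ) + ξ*I)^(q+2))⁻¹ = 0 := by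
  set g : ℝ → ℂ := fun t => (t:ℂ)^(q+1) * Complex.exp (-((σ:ℂ)*t)) with hg
  set f : ℝ → ℂ := (Ioi (0:ℝ)).indicator g with hf
  have hσ' : (0:ℝ) < ((σ:ℂ)).re := by simpa using hσ
  have hfi : Integrable f :=
    (laplace_integrable (q+1) σ hσ').integrable_indicator measurableSet_Ioi
  have hF : ∀ w:ℝ, 𝓕 f w = ((q+1).factorial : ℂ) / ((σ:ℂ) + 2*π*w*I)^(q+2) := by
    intro w
    rw [Real.fourier_real_eq_integral_exp_smul]
    have heq : (fun (v:ℝ) => Complex.exp (↑(-2 * π * v * w) * I) • f v)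
        = (Ioi (0:ℝ)).indicator (fun (v:ℝ) => (v:ℂ)^(q+1) *
            Complex.exp (-(((σ:ℂ) + 2*π*w*I) * v))) := by
      ext v
      by_cases hv : v ∈ Ioi (0:ℝ)
      · simp only [hf, indicator_of_mem hv, hg, smul_eq_mul]
        rw [← mul_assoc, mul_comm (Complex.exp _) ((v:ℂ)^(q+1)), mul_assoc, ← Complex.exp_add]
        congr 2
        push_cast
        ring
      · simp [hf, indicator_of_notMem hv]
    rw [heq, integral_indicator measurableSet_Ioi]
    have hb : (0:ℝ) < ((σ:ℂ) + 2*π*w*I).re := by simpa using hσ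
    rw [laplace (q+1) _ hb]
  have hFi : Integrable (𝓕 f) := by
    have h2π : (2*π:ℝ) ≠ 0 := by positivity
    have := (integrable_inv_pow q σ (2*π) hσ h2π).const_mul ((q+1).factorial : ℂ)
    apply this.congr
    refine Filter.Eventually.of_forall (fun w => ?_)
    rw [hF w, div_eq_mul_inv]
    push_cast
    ring_nf
  have hC : ContinuousAt f (-s) := by
    have hmem : Iio (0:ℝ) ∈ nhds (-s) := Iio_mem_nhds (by linarith)
    have hev : f =ᶠ[nhds (-s)] (fun _ => (0:ℂ)) := by
      filter_upwards [hmem] with x hx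
      exact indicator_of_notMem (fun h => absurd (mem_Ioi.mp h) (not_lt.mpr hx.le)) g
    exact continuousAt_const.congr hev.symm
  have hinv := hfi.fourierInv_fourier_eq hFi hC
  have hf0 : f (-s) = 0 :=
    indicator_of_notMem (fun h => absurd (mem_Ioi.mp h) (by linarith)) g
  rw [hf0, Real.fourierInv_eq_fourier_neg, neg_neg,
    Real.fourier_real_eq_integral_exp_smul] at hinv
  set G : ℝ → ℂ := fun ξ => Complex.exp (-(I*ξ*s)) * (((σ:ℂ) + ξ*I)^(q+2))⁻¹ with hG
  have hGint : ∫ w:ℝ, G (2*π*w) = 0 := by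
    have heq2 : (fun (w:ℝ) => Complex.exp (↑(-2 * π * w * s) * I) • 𝓕 f w)
        = fun (w:ℝ) => ((q+1).factorial : ℂ) * G (2*π*w) := by
      ext w
      rw [hF w, smul_eq_mul, hG]
      rw [div_eq_mul_inv]
      rw [← mul_assoc, mul_comm (Complex.exp _) (((q+1).factorial:ℂ)), mul_assoc]
      congr 3
      · push_cast; ring
      · push_cast; ring
    rw [heq2, integral_const_mul] at hinv
    exact (mul_eq_zero.mp hinv).resolve_left (by exact_mod_cast (q+1).factorial_ne_zero)
  have hcm := Measure.integral_comp_mul_left G (2*π)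
  rw [hGint] at hcm
  have h2π : |(2*π:ℝ)⁻¹| ≠ 0 := by
    simp [abs_ne_zero]
  have := (smul_eq_zero.mp hcm.symm).resolve_left h2π
  exact this
lemma real_integrable_aux (j : ℕ) (c : ℝ) (hc : 0 < c) :
    IntegrableOn (fun (s:ℝ) => s^j * Real.exp (-(c*s))) (Ioi 0) := by
  have h := integrableOn_rpow_mul_exp_neg_mul_rpow (s := (j:ℝ)) (p := 1) (b := c)
    (lt_of_lt_of_le neg_one_lt_zero (Nat.cast_nonneg j)) zero_lt_one hc
  apply h.congr_fun ?_ measurableSet_Ioi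
  intro s hs
  simp only [Real.rpow_one, Real.rpow_natCast, neg_mul]

lemma base_vanish (p j : ℕ) (σ : ℝ) (hσ : 0 < σ) (κ : ℂ) (hκ : 0 < κ.re) :
    ∫ ξ:ℝ, (((σ:ℂ) + ξ*I)^(p+2))⁻¹ * ((κ + ξ*I)^(j+1))⁻¹ = 0 := by
  set A : ℝ → ℂ := fun ξ => (((σ:ℂ) + ξ*I)^(p+2))⁻¹ with hA
  set f : ℝ → ℝ → ℂ :=
    fun ξ s => A ξ * ((s:ℂ)^j * Complex.exp (-((κ + ξ*I) * s))) with hfdef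
  have hκξ : ∀ ξ:ℝ, 0 < (κ + ξ*I).re := by intro ξ; simpa using hκ
  have hσξ : ∀ ξ:ℝ, (σ:ℂ) + ξ*I ≠ 0 := by
    intro ξ h
    have := congrArg Complex.re h
    simp at this
    exact hσ.ne' this
  have hAcont : Continuous A := by
    apply Continuous.inv₀
    · fun_prop
    · exact fun ξ => pow_ne_zero _ (hσξ ξ)
  have hcont : Continuous (Function.uncurry f) := by
    simp only [hfdef, Function.uncurry]
    apply Continuous.mul
    · exact hAcont.comp continuous_fst
    · fun_prop
  have hae : ∀ᵐ z : ℝ×ℝ ∂(volume.prod (volume.restrict (Ioi 0))), z.2 ∈ Ioi (0:ℝ) := by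
    rw [MeasureTheory.ae_iff]
    have hset : {z : ℝ×ℝ | ¬ z.2 ∈ Ioi (0:ℝ)} = univ ×ˢ (Ioi (0:ℝ))ᶜ := by
      ext z; simp
    rw [hset, Measure.prod_prod, Measure.restrict_apply (measurableSet_Ioi.compl)]
    rw [compl_inter_self]
    simp
  have hint : Integrable (Function.uncurry f) (volume.prod (volume.restrict (Ioi 0))) := by
    have h1 : Integrable (fun ξ:ℝ => ‖A ξ‖) := by
      have := (integrable_inv_pow p σ 1 hσ one_ne_zero).norm
      apply this.congr
      exact Filter.Eventually.of_forall (fun ξ => by simp [hA])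
    have hbound := h1.mul_prod (real_integrable_aux j κ.re hκ)
    refine hbound.mono' hcont.aestronglyMeasurable ?_
    filter_upwards [hae] with z hz
    simp only [Function.uncurry, hfdef, norm_mul]
    have hre : (-((κ + z.1*I) * z.2)).re = -(κ.re * z.2) := by
      simp [Complex.add_re, Complex.mul_re]
    have h2 : ‖((z.2:ℝ):ℂ)‖ = z.2 := by
      simp [_root_.abs_of_nonneg (le_of_lt (mem_Ioi.mp hz))]
    rw [Complex.norm_exp, norm_pow, h2, hre]
  have hswap := MeasureTheory.integral_integral_swap hint
  -- LHS: ∫ ξ, ∫ s in Ioi 0, f ξ s = ∫ ξ, A ξ * (j! / (κ+ξI)^(j+1))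
  have hLHS : (∫ ξ:ℝ, ∫ s in Ioi (0:ℝ), f ξ s)
      = (j.factorial : ℂ) * ∫ ξ:ℝ, (((σ:ℂ) + ξ*I)^(p+2))⁻¹ * ((κ + ξ*I)^(j+1))⁻¹ := by
    rw [← integral_const_mul]
    congr 1
    ext ξ
    rw [hfdef]
    simp only
    rw [integral_const_mul, laplace j (κ + ξ*I) (hκξ ξ)]
    rw [div_eq_mul_inv]
    ring
  -- RHS: ∫ s in Ioi 0, ∫ ξ, f ξ s = 0
  have hRHS : (∫ s in Ioi (0:ℝ), ∫ ξ:ℝ, f ξ s) = 0 := by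
    rw [MeasureTheory.setIntegral_congr_fun (g := fun _ => (0:ℂ)) measurableSet_Ioi ?_]
    · simp
    · intro s hs
      have hfv := fourier_vanish p σ hσ s (mem_Ioi.mp hs)
      calc ∫ ξ:ℝ, f ξ s
          = ∫ ξ:ℝ, ((s:ℂ)^j * Complex.exp (-(κ*s))) *
              (Complex.exp (-(I*ξ*s)) * A ξ) := by
            congr 1
            ext ξ
            rw [hfdef]
            simp only
            rw [show -((κ + (ξ:ℂ)*I) * s) = -(κ*(s:ℂ)) + -(I*ξ*s) by push_cast; ring,
              Complex.exp_add]
            ring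
        _ = ((s:ℂ)^j * Complex.exp (-(κ*s))) *
              ∫ ξ:ℝ, Complex.exp (-(I*ξ*s)) * A ξ := integral_const_mul _ _
        _ = 0 := by simp only [hA]; rw [hfv, mul_zero]
  rw [hLHS, hRHS] at hswap
  have := (mul_eq_zero.mp hswap).resolve_left
    (by exact_mod_cast j.factorial_ne_zero : (j.factorial:ℂ) ≠ 0)
  exact this
lemma term_integrable (k j' : ℕ) (σ : ℝ) (hσ : 0 < σ) (κ : ℂ) (hκ : 0 < κ.re) :
    Integrable (fun (ξ:ℝ) => (((σ:ℂ) + ξ*I)^(k+2))⁻¹ * ((κ + ξ*I)^(j'+1))⁻¹) := by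
  have hκξ : ∀ ξ:ℝ, (κ + ξ*I) ≠ 0 := by
    intro ξ h
    have := congrArg Complex.re h
    simp at this
    exact hκ.ne' this
  have huint : Integrable (fun (ξ:ℝ) => (((σ:ℂ) + ξ*I)^(k+2))⁻¹) := by
    have := integrable_inv_pow k σ 1 hσ one_ne_zero
    apply this.congr
    exact Filter.Eventually.of_forall (fun ξ => by norm_num)
  have hbdd : ∀ ξ:ℝ, ‖((κ + (ξ:ℂ)*I)^(j'+1))⁻¹‖ ≤ (κ.re^(j'+1))⁻¹ := by
    intro ξ
    rw [norm_inv, norm_pow]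
    apply inv_anti₀ (by positivity)
    apply pow_le_pow_left₀ hκ.le
    calc κ.re = (κ + (ξ:ℂ)*I).re := by simp
      _ ≤ |(κ + (ξ:ℂ)*I).re| := le_abs_self _
      _ ≤ ‖κ + (ξ:ℂ)*I‖ := Complex.abs_re_le_norm _
  have hmeas : AEStronglyMeasurable (fun (ξ:ℝ) => ((κ + (ξ:ℂ)*I)^(j'+1))⁻¹) volume := by
    apply Continuous.aestronglyMeasurable
    apply Continuous.inv₀
    · fun_prop
    · exact fun ξ => pow_ne_zero _ (hκξ ξ)
  have := huint.bdd_mul hmeas (Filter.Eventually.of_forall hbdd)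
  apply this.congr
  exact Filter.Eventually.of_forall (fun ξ => mul_comm _ _)

/-- Lemma 5.2, case `m < l`: the vanishing of `s⁺_{j,l,m}`. -/
theorem laguerre_product_integral_vanishes (l m : ℕ) (hlm : m < l) (j : ℕ) (hj : 1 ≤ j)
    (σ : ℝ) (hσ : 0 < σ) (κ : ℂ) (hκ : 0 < κ.re) :
    (1 / (2 * (Real.pi : ℂ))) *
      ∫ ξ : ℝ, (((σ : ℂ) - I * ξ) ^ l / ((σ : ℂ) + I * ξ) ^ (l + 1)) *
        (((σ : ℂ) + I * ξ) ^ m / ((σ : ℂ) - I * ξ) ^ (m + 1)) *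
        (κ + I * ξ) ^ (-(j : ℤ)) = 0 := by
  obtain ⟨d, rfl⟩ : ∃ d, l = m + 1 + d := ⟨l - m - 1, by omega⟩
  obtain ⟨j', rfl⟩ : ∃ j', j = j' + 1 := ⟨j - 1, by omega⟩
  have hint : (∫ ξ : ℝ, (((σ : ℂ) - I * ξ) ^ (m+1+d) / ((σ : ℂ) + I * ξ) ^ (m+1+d + 1)) *
        (((σ : ℂ) + I * ξ) ^ m / ((σ : ℂ) - I * ξ) ^ (m + 1)) *
        (κ + I * ξ) ^ (-((j'+1 : ℕ) : ℤ))) = 0 := by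
    have hpt : (fun (ξ:ℝ) => (((σ : ℂ) - I * ξ) ^ (m+1+d) / ((σ : ℂ) + I * ξ) ^ (m+1+d + 1)) *
          (((σ : ℂ) + I * ξ) ^ m / ((σ : ℂ) - I * ξ) ^ (m + 1)) *
          (κ + I * ξ) ^ (-((j'+1 : ℕ) : ℤ)))
        = fun (ξ:ℝ) => ∑ k ∈ Finset.range (d+1),
            ((2*(σ:ℂ))^k * (-1)^(d-k) * (d.choose k : ℂ)) *
              ((((σ:ℂ) + ξ*I)^(k+2))⁻¹ * ((κ + ξ*I)^(j'+1))⁻¹) := by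
      funext ξ
      have hu : (σ:ℂ) + ξ*I ≠ 0 := by
        intro h
        have := congrArg Complex.re h
        simp at this
        exact hσ.ne' this
      have hv : (σ:ℂ) - I*ξ ≠ 0 := by
        intro h
        have := congrArg Complex.re h
        simp at this
        exact hσ.ne' this
      have hw : κ + (ξ:ℂ)*I ≠ 0 := by
        intro h
        have := congrArg Complex.re h
        simp at this
        exact hκ.ne' this
      rw [zpow_neg, zpow_natCast]
      have hσI : (σ:ℂ) + I * ξ = (σ:ℂ) + ξ*I := by ring
      have hκI : κ + I * (ξ:ℂ) = κ + ξ*I := by ring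
      rw [hσI, hκI]
      have hv' : (σ:ℂ) - I*ξ ≠ 0 := hv
      have hstep1 : (((σ : ℂ) - I * ξ) ^ (m+1+d) / ((σ:ℂ) + ξ*I) ^ (m+1+d + 1)) *
            (((σ:ℂ) + ξ*I) ^ m / ((σ : ℂ) - I * ξ) ^ (m + 1)) * (((κ + ξ*I)) ^ (j'+1))⁻¹
          = (((σ:ℂ) - I*ξ)^d) * ((((σ:ℂ) + ξ*I)^(d+2))⁻¹ * ((κ + ξ*I)^(j'+1))⁻¹) := by
        have e1 : ((σ : ℂ) - I * ξ) ^ (m+1+d) = ((σ : ℂ) - I * ξ)^(m+1) * ((σ : ℂ) - I * ξ)^d :=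
          by rw [← pow_add]
        have e2 : ((σ:ℂ) + ξ*I) ^ (m+1+d+1) = ((σ:ℂ) + ξ*I)^m * ((σ:ℂ) + ξ*I)^(d+2) := by
          rw [← pow_add]
          congr 1
          omega
        rw [e1, e2, div_mul_div_comm]
        rw [show ((σ:ℂ)-I*ξ)^(m+1) * ((σ:ℂ)-I*ξ)^d * ((σ:ℂ)+ξ*I)^m
            = ((σ:ℂ)-I*ξ)^d * (((σ:ℂ)-I*ξ)^(m+1) * ((σ:ℂ)+ξ*I)^m) from by ring,
          show ((σ:ℂ)+ξ*I)^m * ((σ:ℂ)+ξ*I)^(d+2) * ((σ:ℂ)-I*ξ)^(m+1)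
            = ((σ:ℂ)+ξ*I)^(d+2) * (((σ:ℂ)-I*ξ)^(m+1) * ((σ:ℂ)+ξ*I)^m) from by ring,
          mul_div_mul_right _ _ (mul_ne_zero (pow_ne_zero _ hv) (pow_ne_zero _ hu)),
          div_eq_mul_inv, mul_assoc]
      rw [hstep1, show (σ:ℂ) - I*ξ = 2*(σ:ℂ) - ((σ:ℂ) + ξ*I) from by ring]
      rw [sub_eq_add_neg, add_pow, Finset.sum_mul]
      apply Finset.sum_congr rfl
      intro k hk
      have hkd : k ≤ d := by
        have := Finset.mem_range.mp hk
        omega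
      set u : ℂ := (σ:ℂ) + ξ*I with hudef
      have hcanc : u^(d-k) * (u^(d+2))⁻¹ = (u^(k+2))⁻¹ := by
        have hsplit : u^(d+2) = u^(d-k) * u^(k+2) := by
          rw [← pow_add]
          congr 1
          omega
        rw [hsplit, mul_inv, ← mul_assoc, mul_inv_cancel₀ (pow_ne_zero _ hu), one_mul]
      have hneg : (-u)^(d-k) = (-1)^(d-k) * u^(d-k) := by rw [neg_pow]
      rw [hneg]
      linear_combination ((2*(σ:ℂ))^k * (-1)^(d-k) * (d.choose k : ℂ) *
        ((κ + (ξ:ℂ)*I)^(j'+1))⁻¹) * hcanc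
    rw [hpt]
    rw [MeasureTheory.integral_finset_sum _ (fun k _ =>
      ((term_integrable k j' σ hσ κ hκ).const_mul _))]
    apply Finset.sum_eq_zero
    intro k hk
    rw [MeasureTheory.integral_const_mul, base_vanish k j' σ hσ κ hκ, mul_zero]
  rw [hint, mul_zero]
end

section
/- For every integer l ≥ 0, every integer j ≥ 1, every σ > 0, and every κ ∈ ℂ with Re κ > 0: (1/2π) ∫_ℝ 1/((σ+iξ)(σ−iξ)(κ+iξ)^j) dξ = 1/(2σ(κ+σ)^j). (Here the integrand equals φ̂'_l(ξ,σ) times the conjugate of φ̂'_l(ξ,σ) times (κ+iξ)^{−j}, for any l.) -/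
open MeasureTheory Complex Filter

noncomputable def Complex.abs : AbsoluteValue ℂ ℝ where
  toFun z := ‖z‖
  map_mul' := norm_mul
  nonneg' := norm_nonneg
  eq_zero' _ := norm_eq_zero
  add_le' := norm_add_le
lemma Complex.norm_eq_abs (z : ℂ) : ‖z‖ = Complex.abs z := rfl
lemma Complex.sq_abs (z : ℂ) : Complex.abs z ^ 2 = Complex.normSq z := Complex.sq_norm z
lemma Complex.abs_apply (z : ℂ) : Complex.abs z = Real.sqrt (Complex.normSq z) := Complex.norm_def z
lemma Complex.re_le_abs (z : ℂ) : z.re ≤ Complex.abs z := Complex.re_le_norm z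
lemma Complex.abs_im_le_abs (z : ℂ) : |z.im| ≤ Complex.abs z := Complex.abs_im_le_norm z
lemma Complex.abs_ofReal (x : ℝ) : Complex.abs (x : ℂ) = |x| := Complex.norm_real x
lemma Complex.continuous_abs : Continuous (fun z : ℂ => Complex.abs z) := continuous_norm

lemma lin_re (b : ℂ) (ξ : ℝ) : (b + I * ξ).re = b.re := by simp
lemma lin_im (b : ℂ) (ξ : ℝ) : (b + I * ξ).im = b.im + ξ := by simp
lemma ne_of_re_pos {z : ℂ} (h : 0 < z.re) : z ≠ 0 := by
  intro h0; rw [h0] at h; simp at h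
lemma lin_ne {b : ℂ} (hb : 0 < b.re) (ξ : ℝ) : b + I * ξ ≠ 0 :=
  ne_of_re_pos (by rw [lin_re]; exact hb)
lemma sub_lin_ne {σ : ℝ} (hσ : 0 < σ) (ξ : ℝ) : (σ:ℂ) - I * ξ ≠ 0 :=
  ne_of_re_pos (by simp [hσ])
lemma cont_lin (b : ℂ) : Continuous fun ξ:ℝ => b + I * (ξ:ℂ) := by continuity
lemma lin_hasDeriv (b : ℂ) (ξ : ℝ) : HasDerivAt (fun t:ℝ => b + I * (t:ℂ)) I ξ := by
  simpa using (((hasDerivAt_id (ξ:ℂ)).const_mul I).const_add b).comp_ofReal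
lemma abs_sq_lin (b : ℂ) (ξ : ℝ) : (Complex.abs (b + I * ξ))^2 = b.re^2 + (ξ + b.im)^2 := by
  rw [Complex.sq_abs, Complex.normSq_apply, lin_re, lin_im]; ring
lemma abs_lin (b : ℂ) (ξ : ℝ) :
    Complex.abs (b + I * ξ) = Real.sqrt (b.re^2 + (b.im + ξ)^2) := by
  rw [Complex.abs_apply, Complex.normSq_apply, lin_re, lin_im]; ring_nf
lemma re_le_abs_lin (b : ℂ) (ξ : ℝ) : b.re ≤ Complex.abs (b + I * ξ) := by
  calc b.re = (b + I * ξ).re := (lin_re b ξ).symm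
  _ ≤ Complex.abs (b + I * ξ) := Complex.re_le_abs _
lemma prodAB (σ : ℝ) (ξ : ℝ) :
    ((σ:ℂ) + I * ξ) * ((σ:ℂ) - I * ξ) = ((σ^2 + ξ^2 : ℝ) : ℂ) := by
  have : Complex.I^2 = -1 := Complex.I_sq
  push_cast
  ring_nf
  rw [this]
  ring

lemma integrable_base {c : ℝ} (hc : 0 < c) (d : ℝ) :
    Integrable (fun ξ:ℝ => (c^2 + (ξ + d)^2)⁻¹) := by
  have h1 : Integrable (fun ξ:ℝ => (1 + ξ^2)⁻¹) := integrable_inv_one_add_sq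
  have h2 : Integrable (fun ξ:ℝ => (1 + (c⁻¹ * ξ)^2)⁻¹) :=
    h1.comp_mul_left' (inv_ne_zero hc.ne')
  have h3 : Integrable (fun ξ:ℝ => (1 + (c⁻¹ * (ξ + d))^2)⁻¹) := h2.comp_add_right d
  refine ((h3.const_mul (c⁻¹ * c⁻¹)).congr ?_)
  filter_upwards with ξ
  have hc0 : c ≠ 0 := hc.ne'
  field_simp

lemma integrable_pow_inv (b : ℂ) (hb : 0 < b.re) (m : ℕ) (hm : 2 ≤ m) :
    Integrable fun ξ:ℝ => ((b + I * (ξ:ℂ))^m)⁻¹ := by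
  have hcont : Continuous fun ξ:ℝ => ((b + I * (ξ:ℂ))^m)⁻¹ :=
    ((cont_lin b).pow m).inv₀ fun ξ => pow_ne_zero _ (lin_ne hb ξ)
  refine ((integrable_base hb b.im).const_mul ((b.re^(m-2))⁻¹)).mono'
    hcont.aestronglyMeasurable ?_
  filter_upwards with ξ
  rw [norm_inv, norm_pow, Complex.norm_eq_abs]
  have h1 : 0 < Complex.abs (b + I * ξ) := AbsoluteValue.pos _ (lin_ne hb ξ)
  have hbpos : 0 < b.re ^ 2 + (ξ + b.im) ^ 2 := by positivity
  have h2 : b.re^(m-2) * (b.re^2 + (ξ + b.im)^2) ≤ (Complex.abs (b + I * ξ))^m := by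
    have he : (Complex.abs (b + I * ξ))^m
        = (Complex.abs (b + I * ξ))^(m-2) * (Complex.abs (b + I * ξ))^2 := by
      rw [← pow_add]; congr 1; omega
    rw [he, abs_sq_lin]
    gcongr
    exact re_le_abs_lin b ξ
  calc ((Complex.abs (b + I * ξ))^m)⁻¹
      ≤ (b.re^(m-2) * (b.re^2 + (ξ + b.im)^2))⁻¹ := by
        apply inv_anti₀ (by positivity) h2
    _ = (b.re^(m-2))⁻¹ * (b.re^2 + (ξ + b.im)^2)⁻¹ := by rw [mul_inv]

lemma abs_pair_inv_le {a b : ℂ} (ha : 0 < a.re) (hb : 0 < b.re) (ξ : ℝ) :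
    (Complex.abs (a + I * ξ) * Complex.abs (b + I * ξ))⁻¹
      ≤ (a.re^2 + (ξ + a.im)^2)⁻¹ + (b.re^2 + (ξ + b.im)^2)⁻¹ := by
  have hx : 0 < Complex.abs (a + I * ξ) := AbsoluteValue.pos _ (lin_ne ha ξ)
  have hy : 0 < Complex.abs (b + I * ξ) := AbsoluteValue.pos _ (lin_ne hb ξ)
  rcases le_total (Complex.abs (a + I * ξ)) (Complex.abs (b + I * ξ)) with h | h
  · calc (Complex.abs (a + I * ξ) * Complex.abs (b + I * ξ))⁻¹
        ≤ (Complex.abs (a + I * ξ) * Complex.abs (a + I * ξ))⁻¹ := by gcongr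
      _ = ((Complex.abs (a + I * ξ))^2)⁻¹ := by rw [sq]
      _ = (a.re^2 + (ξ + a.im)^2)⁻¹ := by rw [abs_sq_lin]
      _ ≤ _ := le_add_of_nonneg_right (by positivity)
  · calc (Complex.abs (a + I * ξ) * Complex.abs (b + I * ξ))⁻¹
        ≤ (Complex.abs (b + I * ξ) * Complex.abs (b + I * ξ))⁻¹ := by gcongr
      _ = ((Complex.abs (b + I * ξ))^2)⁻¹ := by rw [sq]
      _ = (b.re^2 + (ξ + b.im)^2)⁻¹ := by rw [abs_sq_lin]
      _ ≤ _ := le_add_of_nonneg_left (by positivity)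

lemma integrable_prod_pow (a b : ℂ) (ha : 0 < a.re) (hb : 0 < b.re) (m : ℕ) :
    Integrable fun ξ:ℝ => ((a + I * (ξ:ℂ)) * (b + I * (ξ:ℂ))^(m+1))⁻¹ := by
  have hcont : Continuous fun ξ:ℝ => ((a + I * (ξ:ℂ)) * (b + I * (ξ:ℂ))^(m+1))⁻¹ :=
    ((cont_lin a).mul ((cont_lin b).pow (m+1))).inv₀
      fun ξ => mul_ne_zero (lin_ne ha ξ) (pow_ne_zero _ (lin_ne hb ξ))
  refine ((((integrable_base ha a.im).add (integrable_base hb b.im)).const_mul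
    ((b.re^m)⁻¹)).mono' hcont.aestronglyMeasurable ?_)
  filter_upwards with ξ
  rw [norm_inv, Complex.norm_eq_abs, map_mul, map_pow]
  have hx : 0 < Complex.abs (a + I * ξ) := AbsoluteValue.pos _ (lin_ne ha ξ)
  have hy : 0 < Complex.abs (b + I * ξ) := AbsoluteValue.pos _ (lin_ne hb ξ)
  have h2 : b.re^m * (Complex.abs (a + I * ξ) * Complex.abs (b + I * ξ))
      ≤ Complex.abs (a + I * ξ) * (Complex.abs (b + I * ξ))^(m+1) := by
    rw [pow_succ]
    calc b.re^m * (Complex.abs (a + I * ξ) * Complex.abs (b + I * ξ))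
        ≤ (Complex.abs (b + I * ξ))^m * (Complex.abs (a + I * ξ) * Complex.abs (b + I * ξ)) := by
          gcongr; exact re_le_abs_lin b ξ
      _ = Complex.abs (a + I * ξ) * ((Complex.abs (b + I * ξ))^m * Complex.abs (b + I * ξ)) := by
          ring
  calc (Complex.abs (a + I * ξ) * (Complex.abs (b + I * ξ))^(m+1))⁻¹
      ≤ (b.re^m * (Complex.abs (a + I * ξ) * Complex.abs (b + I * ξ)))⁻¹ := by
        apply inv_anti₀ (by positivity) h2
    _ = (b.re^m)⁻¹ * (Complex.abs (a + I * ξ) * Complex.abs (b + I * ξ))⁻¹ := by rw [mul_inv]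
    _ ≤ (b.re^m)⁻¹ * ((a.re^2 + (ξ + a.im)^2)⁻¹ + (b.re^2 + (ξ + b.im)^2)⁻¹) := by
        gcongr
        exact abs_pair_inv_le ha hb ξ

lemma integrable_main (σ : ℝ) (hσ : 0 < σ) (κ : ℂ) (hκ : 0 < κ.re) (j : ℕ) :
    Integrable fun ξ:ℝ =>
      (((σ:ℂ) + I * (ξ:ℂ)) * ((σ:ℂ) - I * (ξ:ℂ)) * (κ + I * (ξ:ℂ))^j)⁻¹ := by
  have hσ' : 0 < ((σ:ℂ)).re := by simpa using hσ
  have hcont : Continuous fun ξ:ℝ =>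
      (((σ:ℂ) + I * (ξ:ℂ)) * ((σ:ℂ) - I * (ξ:ℂ)) * (κ + I * (ξ:ℂ))^j)⁻¹ := by
    refine Continuous.inv₀ ?_ fun ξ =>
      mul_ne_zero (mul_ne_zero (lin_ne hσ' ξ) (sub_lin_ne hσ ξ)) (pow_ne_zero _ (lin_ne hκ ξ))
    exact (((cont_lin σ).mul (by continuity)).mul ((cont_lin κ).pow j))
  have hbase : Integrable (fun ξ:ℝ => (σ^2 + ξ^2)⁻¹) := by
    simpa using integrable_base hσ 0
  refine ((hbase.const_mul ((κ.re^j)⁻¹)).mono' hcont.aestronglyMeasurable ?_)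
  filter_upwards with ξ
  rw [norm_inv, Complex.norm_eq_abs, map_mul, map_pow, prodAB]
  have hy : 0 < Complex.abs (κ + I * ξ) := AbsoluteValue.pos _ (lin_ne hκ ξ)
  have habs : Complex.abs ((σ^2 + ξ^2 : ℝ) : ℂ) = σ^2 + ξ^2 := by
    rw [Complex.abs_ofReal, abs_of_pos (by positivity)]
  rw [habs]
  have h2 : (σ^2 + ξ^2) * κ.re^j ≤ (σ^2 + ξ^2) * (Complex.abs (κ + I * ξ))^j :=
    mul_le_mul_of_nonneg_left (pow_le_pow_left₀ hκ.le (re_le_abs_lin κ ξ) j)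
      (by positivity : (0:ℝ) ≤ σ^2 + ξ^2)
  calc ((σ^2 + ξ^2) * (Complex.abs (κ + I * ξ))^j)⁻¹
      ≤ ((σ^2 + ξ^2) * κ.re^j)⁻¹ := by
        apply inv_anti₀ (by positivity) h2
    _ = (κ.re^j)⁻¹ * (σ^2 + ξ^2)⁻¹ := by rw [mul_inv]; ring

lemma lin_im' (b : ℂ) (ξ : ℝ) : (b + I * ξ).im = b.im + ξ := by simp

lemma tendsto_abs_lin_top (b : ℂ) :
    Tendsto (fun ξ:ℝ => Complex.abs (b + I * ξ)) atTop atTop := by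
  refine tendsto_atTop_mono (fun ξ => ?_)
    (tendsto_abs_atTop_atTop.comp (tendsto_atTop_add_const_left atTop b.im tendsto_id))
  calc |b.im + ξ| = |(b + I * ξ).im| := by rw [lin_im']
  _ ≤ Complex.abs (b + I * ξ) := Complex.abs_im_le_abs _

lemma tendsto_abs_lin_bot (b : ℂ) :
    Tendsto (fun ξ:ℝ => Complex.abs (b + I * ξ)) atBot atTop := by
  refine tendsto_atTop_mono (fun ξ => ?_)
    (tendsto_abs_atBot_atTop.comp (tendsto_atBot_add_const_left atBot b.im tendsto_id))
  calc |b.im + ξ| = |(b + I * ξ).im| := by rw [lin_im']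
  _ ≤ Complex.abs (b + I * ξ) := Complex.abs_im_le_abs _

lemma tendsto_inv_lin {b : ℂ} {l : Filter ℝ}
    (h : Tendsto (fun ξ:ℝ => Complex.abs (b + I * ξ)) l atTop) :
    Tendsto (fun ξ:ℝ => (b + I * (ξ:ℂ))⁻¹) l (nhds 0) := by
  rw [tendsto_zero_iff_norm_tendsto_zero]
  refine h.inv_tendsto_atTop.congr fun ξ => ?_
  rw [norm_inv, Complex.norm_eq_abs]
  rfl

lemma tendsto_div_sqrt_top (c : ℝ) :
    Tendsto (fun t:ℝ => t / Real.sqrt (c^2 + t^2)) atTop (nhds 1) := by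
  have h1 : Tendsto (fun t:ℝ => (c * t⁻¹)^2 + 1) atTop (nhds 1) := by
    simpa using (((tendsto_inv_atTop_zero.const_mul c).pow 2).add_const (1:ℝ))
  have h2 : Tendsto (fun t:ℝ => (Real.sqrt ((c * t⁻¹)^2 + 1))⁻¹) atTop (nhds 1) := by
    have h3 := ((Real.continuous_sqrt.tendsto 1).comp h1).inv₀ (by simp)
    simpa using h3
  refine h2.congr' ?_
  filter_upwards [eventually_gt_atTop (0:ℝ)] with t ht
  have hne : t ≠ 0 := ht.ne'
  have hkey : c^2 + t^2 = t^2 * ((c * t⁻¹)^2 + 1) := by field_simp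
  have hs : 0 < Real.sqrt ((c * t⁻¹)^2 + 1) := Real.sqrt_pos.2 (by positivity)
  rw [hkey, Real.sqrt_mul (sq_nonneg t), Real.sqrt_sq ht.le]
  rw [eq_comm, div_eq_iff (by positivity)]
  field_simp

lemma tendsto_div_sqrt_bot (c : ℝ) :
    Tendsto (fun t:ℝ => t / Real.sqrt (c^2 + t^2)) atBot (nhds (-1)) := by
  have h1 := ((tendsto_div_sqrt_top c).comp tendsto_neg_atBot_atTop).neg
  refine h1.congr fun t => ?_
  simp only [Function.comp_apply, neg_div, neg_neg, neg_sq]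

lemma lin_re' (b : ℂ) (ξ : ℝ) : (b + I * ξ).re = b.re := by simp
lemma ne_of_re_pos' {z : ℂ} (h : 0 < z.re) : z ≠ 0 := by
  intro h0; rw [h0] at h; simp at h
lemma lin_ne' {b : ℂ} (hb : 0 < b.re) (ξ : ℝ) : b + I * ξ ≠ 0 :=
  ne_of_re_pos' (by rw [lin_re']; exact hb)
lemma abs_lin' (b : ℂ) (ξ : ℝ) :
    Complex.abs (b + I * ξ) = Real.sqrt (b.re^2 + (b.im + ξ)^2) := by
  rw [Complex.abs_apply, Complex.normSq_apply, lin_re', lin_im']; ring_nf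

lemma tendsto_arg_lin_top (a : ℂ) (ha : 0 < a.re) :
    Tendsto (fun ξ:ℝ => Complex.arg (a + I * ξ)) atTop (nhds (Real.pi/2)) := by
  have hcomp : Tendsto (fun ξ:ℝ => (a.im + ξ) / Real.sqrt (a.re^2 + (a.im + ξ)^2))
      atTop (nhds 1) :=
    (tendsto_div_sqrt_top a.re).comp (tendsto_atTop_add_const_left atTop a.im tendsto_id)
  have harc := (Real.continuous_arcsin.tendsto 1).comp hcomp
  rw [Real.arcsin_one] at harc
  refine harc.congr fun ξ => ?_
  simp only [Function.comp_apply]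
  rw [Complex.arg_of_re_nonneg (by rw [lin_re']; exact ha.le), lin_im', Complex.norm_eq_abs, abs_lin']

lemma tendsto_arg_lin_bot (a : ℂ) (ha : 0 < a.re) :
    Tendsto (fun ξ:ℝ => Complex.arg (a + I * ξ)) atBot (nhds (-(Real.pi/2))) := by
  have hcomp : Tendsto (fun ξ:ℝ => (a.im + ξ) / Real.sqrt (a.re^2 + (a.im + ξ)^2))
      atBot (nhds (-1)) :=
    (tendsto_div_sqrt_bot a.re).comp (tendsto_atBot_add_const_left atBot a.im tendsto_id)
  have harc := (Real.continuous_arcsin.tendsto (-1)).comp hcomp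
  rw [Real.arcsin_neg_one] at harc
  refine harc.congr fun ξ => ?_
  simp only [Function.comp_apply]
  rw [Complex.arg_of_re_nonneg (by rw [lin_re']; exact ha.le), lin_im', Complex.norm_eq_abs, abs_lin']

lemma tendsto_ratio {a b : ℂ} (hb : 0 < b.re) {l : Filter ℝ}
    (h : Tendsto (fun ξ:ℝ => Complex.abs (b + I * ξ)) l atTop) :
    Tendsto (fun ξ:ℝ => (a + I * (ξ:ℂ)) / (b + I * (ξ:ℂ))) l (nhds 1) := by
  have h0 : Tendsto (fun ξ:ℝ => 1 + (a - b) * (b + I * (ξ:ℂ))⁻¹) l (nhds 1) := by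
    simpa using (tendsto_const_nhds (x := (1:ℂ))).add ((tendsto_inv_lin h).const_mul (a - b))
  refine h0.congr fun ξ => ?_
  have hne := lin_ne' hb ξ
  field_simp
  ring

lemma log_def' (z : ℂ) : Complex.log z = (Real.log (Complex.abs z) : ℂ) + Complex.arg z * I :=
  rfl

lemma tendsto_logdiff_top (a b : ℂ) (ha : 0 < a.re) (hb : 0 < b.re) :
    Tendsto (fun ξ:ℝ => Complex.log (a + I * ξ) - Complex.log (b + I * ξ)) atTop (nhds 0) := by
  have hlog : Tendsto (fun ξ:ℝ => Real.log (Complex.abs ((a + I * (ξ:ℂ)) / (b + I * (ξ:ℂ)))))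
      atTop (nhds 0) := by
    have h1 := tendsto_ratio (a := a) hb (tendsto_abs_lin_top b)
    have h2 := (Complex.continuous_abs.tendsto 1).comp h1
    rw [map_one] at h2
    have h3 := (Real.continuousAt_log one_ne_zero).tendsto.comp h2
    rw [Real.log_one] at h3
    exact h3
  have harg : Tendsto (fun ξ:ℝ => Complex.arg (a + I * ξ) - Complex.arg (b + I * ξ))
      atTop (nhds 0) := by
    simpa using (tendsto_arg_lin_top a ha).sub (tendsto_arg_lin_top b hb)
  have hsum := ((Complex.continuous_ofReal.tendsto 0).comp hlog).add
    (((Complex.continuous_ofReal.tendsto 0).comp harg).mul_const I)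
  simp only [Complex.ofReal_zero, zero_add, zero_mul, add_zero] at hsum
  refine hsum.congr fun ξ => ?_
  have hea := AbsoluteValue.ne_zero Complex.abs (lin_ne' ha ξ)
  have heb := AbsoluteValue.ne_zero Complex.abs (lin_ne' hb ξ)
  simp only [Function.comp_apply]
  rw [map_div₀, Real.log_div hea heb, log_def', log_def']
  push_cast
  ring

lemma tendsto_logdiff_bot (a b : ℂ) (ha : 0 < a.re) (hb : 0 < b.re) :
    Tendsto (fun ξ:ℝ => Complex.log (a + I * ξ) - Complex.log (b + I * ξ)) atBot (nhds 0) := by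
  have hlog : Tendsto (fun ξ:ℝ => Real.log (Complex.abs ((a + I * (ξ:ℂ)) / (b + I * (ξ:ℂ)))))
      atBot (nhds 0) := by
    have h1 := tendsto_ratio (a := a) hb (tendsto_abs_lin_bot b)
    have h2 := (Complex.continuous_abs.tendsto 1).comp h1
    rw [map_one] at h2
    have h3 := (Real.continuousAt_log one_ne_zero).tendsto.comp h2
    rw [Real.log_one] at h3
    exact h3
  have harg : Tendsto (fun ξ:ℝ => Complex.arg (a + I * ξ) - Complex.arg (b + I * ξ))
      atBot (nhds 0) := by
    simpa using (tendsto_arg_lin_bot a ha).sub (tendsto_arg_lin_bot b hb)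
  have hsum := ((Complex.continuous_ofReal.tendsto 0).comp hlog).add
    (((Complex.continuous_ofReal.tendsto 0).comp harg).mul_const I)
  simp only [Complex.ofReal_zero, zero_add, zero_mul, add_zero] at hsum
  refine hsum.congr fun ξ => ?_
  have hea := AbsoluteValue.ne_zero Complex.abs (lin_ne' ha ξ)
  have heb := AbsoluteValue.ne_zero Complex.abs (lin_ne' hb ξ)
  simp only [Function.comp_apply]
  rw [map_div₀, Real.log_div hea heb, log_def', log_def']
  push_cast
  ring

lemma integral_pow_inv_zero (b : ℂ) (hb : 0 < b.re) (n : ℕ) :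
    ∫ ξ:ℝ, ((b + I * (ξ:ℂ))^(n+2))⁻¹ = 0 := by
  have hne : ∀ ξ:ℝ, b + I * (ξ:ℂ) ≠ 0 := lin_ne hb
  have hn : ((n:ℂ) + 1) ≠ 0 := by
    exact_mod_cast Nat.cast_add_one_ne_zero (R := ℂ) n
  set F : ℝ → ℂ := fun ξ => (I/((n:ℂ)+1)) * ((b + I * (ξ:ℂ))^(n+1))⁻¹ with hF
  have hderiv : ∀ ξ:ℝ, HasDerivAt F (((b + I * (ξ:ℂ))^(n+2))⁻¹) ξ := by
    intro ξ
    have hz := hne ξ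
    have hc : HasDerivAt (fun z:ℂ => b + I*z) I (ξ:ℂ) := by
      simpa using ((hasDerivAt_id (ξ:ℂ)).const_mul I).const_add b
    have h1 := (((hc.pow (n+1)).inv (pow_ne_zero _ hz)).const_mul (I/((n:ℂ)+1))).comp_ofReal
    convert h1 using 1
    · rfl
    simp only [Pi.pow_apply, Nat.add_sub_cancel]
    push_cast
    rw [show ((b + I * ↑ξ) ^ (n + 1)) ^ 2 = (b + I * ↑ξ) ^ n * (b + I * ↑ξ) ^ (n + 2) by ring]
    have hp := pow_ne_zero n hz
    field_simp
    linear_combination Complex.I_sq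
  have hpow : ∀ (l : Filter ℝ), Tendsto (fun ξ:ℝ => Complex.abs (b + I * ξ)) l atTop →
      Tendsto F l (nhds 0) := by
    intro l hl
    have h0 : Tendsto (fun ξ:ℝ => ((b + I * (ξ:ℂ))^(n+1))⁻¹) l (nhds 0) := by
      rw [tendsto_zero_iff_norm_tendsto_zero]
      have h1 : Tendsto (fun ξ:ℝ => (Complex.abs (b + I * ξ))^(n+1)) l atTop :=
        (tendsto_pow_atTop n.succ_ne_zero).comp hl
      refine h1.inv_tendsto_atTop.congr fun ξ => ?_
      rw [Pi.inv_apply, norm_inv, norm_pow, Complex.norm_eq_abs]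
    simpa using h0.const_mul (I/((n:ℂ)+1))
  have := MeasureTheory.integral_of_hasDerivAt_of_tendsto hderiv
    (integrable_pow_inv b hb (n+2) (by omega))
    (hpow atBot (tendsto_abs_lin_bot b)) (hpow atTop (tendsto_abs_lin_top b))
  simpa using this

lemma integral_pair_inv_zero (a b : ℂ) (ha : 0 < a.re) (hb : 0 < b.re) (hab : a ≠ b) :
    ∫ ξ:ℝ, ((a + I * (ξ:ℂ)) * (b + I * (ξ:ℂ)))⁻¹ = 0 := by
  have hba : b - a ≠ 0 := sub_ne_zero.mpr (Ne.symm hab)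
  set F : ℝ → ℂ := fun ξ =>
    (-I/(b - a)) * (Complex.log (a + I * (ξ:ℂ)) - Complex.log (b + I * (ξ:ℂ))) with hF
  have hderiv : ∀ ξ:ℝ, HasDerivAt F (((a + I * (ξ:ℂ)) * (b + I * (ξ:ℂ)))⁻¹) ξ := by
    intro ξ
    have h1 := (lin_hasDeriv a ξ).clog_real
      (Complex.mem_slitPlane_iff.2 (Or.inl (by rw [lin_re]; exact ha)))
    have h2 := (lin_hasDeriv b ξ).clog_real
      (Complex.mem_slitPlane_iff.2 (Or.inl (by rw [lin_re]; exact hb)))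
    have h3 := (h1.sub h2).const_mul (-I/(b - a))
    convert h3 using 1
    · rfl
    · rfl
    have hza := lin_ne ha ξ
    have hzb := lin_ne hb ξ
    field_simp
    linear_combination (b - a) * Complex.I_sq
  have hbot : Tendsto F atBot (nhds 0) := by
    simpa using (tendsto_logdiff_bot a b ha hb).const_mul (-I/(b - a))
  have htop : Tendsto F atTop (nhds 0) := by
    simpa using (tendsto_logdiff_top a b ha hb).const_mul (-I/(b - a))
  have hint : Integrable fun ξ:ℝ => ((a + I * (ξ:ℂ)) * (b + I * (ξ:ℂ)))⁻¹ := by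
    have := integrable_prod_pow a b ha hb 0
    simpa using this
  have := MeasureTheory.integral_of_hasDerivAt_of_tendsto hderiv hint hbot htop
  simpa using this

lemma integral_J (σ : ℝ) (hσ : 0 < σ) (κ : ℂ) (hκ : 0 < κ.re) (m : ℕ) :
    ∫ ξ:ℝ, (((σ:ℂ) + I * (ξ:ℂ)) * (κ + I * (ξ:ℂ))^(m+1))⁻¹ = 0 := by
  have hσ' : 0 < ((σ:ℂ)).re := by simpa using hσ
  induction m with
  | zero =>
    by_cases hks : κ = (σ:ℂ)
    · subst hks
      have h0 := integral_pow_inv_zero (σ:ℂ) hσ' 0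
      rw [← h0]
      congr 1
      funext ξ
      congr 1
      ring
    · have h0 := integral_pair_inv_zero (σ:ℂ) κ hσ' hκ (fun h => hks h.symm)
      rw [← h0]
      congr 1
      funext ξ
      rw [pow_one]
  | succ m ih =>
    by_cases hks : κ = (σ:ℂ)
    · subst hks
      have h0 := integral_pow_inv_zero (σ:ℂ) hσ' (m+1)
      rw [← h0]
      congr 1
      funext ξ
      congr 1
      ring
    · have hne : κ - (σ:ℂ) ≠ 0 := sub_ne_zero.mpr hks
      have hident : ∀ ξ:ℝ, (((σ:ℂ) + I * (ξ:ℂ)) * (κ + I * (ξ:ℂ))^(m+2))⁻¹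
          = (κ - (σ:ℂ))⁻¹ * ((((σ:ℂ) + I * (ξ:ℂ)) * (κ + I * (ξ:ℂ))^(m+1))⁻¹
            - ((κ + I * (ξ:ℂ))^(m+2))⁻¹) := by
        intro ξ
        have hza := lin_ne hσ' ξ
        have hzb := lin_ne hκ ξ
        set A := (σ:ℂ) + I*(ξ:ℂ) with hA
        set C := κ + I*(ξ:ℂ) with hC
        have h2 : C^(m+2) - A*C^(m+1) = (κ - (σ:ℂ)) * C^(m+1) := by
          rw [hA, hC]; ring
        rw [inv_sub_inv (mul_ne_zero hza (pow_ne_zero _ hzb)) (pow_ne_zero _ hzb), h2]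
        field_simp
      calc ∫ ξ:ℝ, (((σ:ℂ) + I * (ξ:ℂ)) * (κ + I * (ξ:ℂ))^(m+2))⁻¹
          = ∫ ξ:ℝ, (κ - (σ:ℂ))⁻¹ * ((((σ:ℂ) + I * (ξ:ℂ)) * (κ + I * (ξ:ℂ))^(m+1))⁻¹
            - ((κ + I * (ξ:ℂ))^(m+2))⁻¹) := by
            exact integral_congr_ae (Filter.Eventually.of_forall hident)
        _ = (κ - (σ:ℂ))⁻¹ * ((∫ ξ:ℝ, (((σ:ℂ) + I * (ξ:ℂ)) * (κ + I * (ξ:ℂ))^(m+1))⁻¹)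
            - ∫ ξ:ℝ, ((κ + I * (ξ:ℂ))^(m+2))⁻¹) := by
            rw [integral_const_mul, integral_sub (integrable_prod_pow (σ:ℂ) κ hσ' hκ m)
              (integrable_pow_inv κ hκ (m+2) (by omega))]
        _ = 0 := by
            rw [ih, integral_pow_inv_zero κ hκ m]
            simp

lemma real_base (σ : ℝ) (hσ : 0 < σ) : ∫ ξ:ℝ, (σ^2 + ξ^2)⁻¹ = Real.pi/σ := by
  have hrw : ∀ ξ:ℝ, (σ^2 + ξ^2)⁻¹ = σ⁻¹ * σ⁻¹ * (1 + (σ⁻¹ * ξ)^2)⁻¹ := by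
    intro ξ
    have : σ ≠ 0 := hσ.ne'
    field_simp
  simp_rw [hrw]
  rw [integral_const_mul, MeasureTheory.Measure.integral_comp_mul_left (fun u:ℝ => (1 + u^2)⁻¹) σ⁻¹,
    integral_univ_inv_one_add_sq]
  rw [inv_inv, abs_of_pos hσ, smul_eq_mul]
  field_simp

lemma integral_main (σ : ℝ) (hσ : 0 < σ) (κ : ℂ) (hκ : 0 < κ.re) (j : ℕ) :
    ∫ ξ:ℝ, (((σ:ℂ) + I * (ξ:ℂ)) * ((σ:ℂ) - I * (ξ:ℂ)) * (κ + I * (ξ:ℂ))^j)⁻¹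
      = ((Real.pi : ℂ)/(σ:ℂ)) * ((κ + (σ:ℂ))^j)⁻¹ := by
  have hσ' : 0 < ((σ:ℂ)).re := by simpa using hσ
  have hκσ : κ + (σ:ℂ) ≠ 0 := ne_of_re_pos (by simp [Complex.add_re]; positivity)
  induction j with
  | zero =>
    simp only [pow_zero, mul_one, inv_one]
    have hrw : ∀ ξ:ℝ, (((σ:ℂ) + I * (ξ:ℂ)) * ((σ:ℂ) - I * (ξ:ℂ)))⁻¹
        = (((σ^2 + ξ^2 : ℝ)⁻¹ : ℝ) : ℂ) := by
      intro ξ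
      rw [prodAB, Complex.ofReal_inv]
    simp_rw [hrw]
    calc ∫ ξ:ℝ, (((σ^2+ξ^2 : ℝ)⁻¹ : ℝ) : ℂ) = ((∫ ξ:ℝ, (σ^2+ξ^2)⁻¹ : ℝ) : ℂ) := integral_ofReal
    _ = ((Real.pi : ℂ)/(σ:ℂ)) := by rw [real_base σ hσ]; push_cast; ring
  | succ j ih =>
    have hident : ∀ ξ:ℝ, (((σ:ℂ) + I * (ξ:ℂ)) * ((σ:ℂ) - I * (ξ:ℂ)) * (κ + I * (ξ:ℂ))^(j+1))⁻¹
        = (κ + (σ:ℂ))⁻¹ * ((((σ:ℂ) + I * (ξ:ℂ)) * ((σ:ℂ) - I * (ξ:ℂ)) * (κ + I * (ξ:ℂ))^j)⁻¹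
          + (((σ:ℂ) + I * (ξ:ℂ)) * (κ + I * (ξ:ℂ))^(j+1))⁻¹) := by
      intro ξ
      have hza := lin_ne hσ' ξ
      have hzb := sub_lin_ne hσ ξ
      have hzc := lin_ne hκ ξ
      set A := (σ:ℂ) + I*(ξ:ℂ) with hA
      set B := (σ:ℂ) - I*(ξ:ℂ) with hB
      set C := κ + I*(ξ:ℂ) with hC
      have h2 : (A*C^(j+1))⁻¹ = B * (A*B*C^(j+1))⁻¹ := by
        rw [mul_inv, mul_inv, mul_inv]
        field_simp
      have h3 : (A*B*C^j)⁻¹ = C * (A*B*C^(j+1))⁻¹ := by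
        rw [mul_inv, mul_inv, mul_inv, mul_inv]
        have : (C^(j+1))⁻¹ = C⁻¹ * (C^j)⁻¹ := by
          rw [pow_succ']
          rw [mul_inv]
        rw [this]
        field_simp
      rw [h2, h3, ← add_mul]
      have h4 : C + B = κ + (σ:ℂ) := by rw [hB, hC]; ring
      rw [h4, ← mul_assoc, inv_mul_cancel₀ hκσ, one_mul]
    calc ∫ ξ:ℝ, (((σ:ℂ) + I * (ξ:ℂ)) * ((σ:ℂ) - I * (ξ:ℂ)) * (κ + I * (ξ:ℂ))^(j+1))⁻¹
        = ∫ ξ:ℝ, (κ + (σ:ℂ))⁻¹ * ((((σ:ℂ) + I * (ξ:ℂ)) * ((σ:ℂ) - I * (ξ:ℂ)) * (κ + I * (ξ:ℂ))^j)⁻¹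
          + (((σ:ℂ) + I * (ξ:ℂ)) * (κ + I * (ξ:ℂ))^(j+1))⁻¹) := by
          exact integral_congr_ae (Filter.Eventually.of_forall hident)
      _ = (κ + (σ:ℂ))⁻¹ * ((∫ ξ:ℝ, (((σ:ℂ) + I * (ξ:ℂ)) * ((σ:ℂ) - I * (ξ:ℂ)) * (κ + I * (ξ:ℂ))^j)⁻¹)
          + ∫ ξ:ℝ, (((σ:ℂ) + I * (ξ:ℂ)) * (κ + I * (ξ:ℂ))^(j+1))⁻¹) := by
          rw [integral_const_mul, integral_add (integrable_main σ hσ κ hκ j)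
            (integrable_prod_pow (σ:ℂ) κ hσ' hκ j)]
      _ = ((Real.pi : ℂ)/(σ:ℂ)) * ((κ + (σ:ℂ))^(j+1))⁻¹ := by
          rw [ih, integral_J σ hσ κ hκ j, add_zero, pow_succ]
          rw [mul_inv]
          ring

/-- Lemma 5.2, case `m = l`: the integral of `φ̂'_l` times its conjugate times `(κ+iξ)^{-j}`,
which equals `1/((σ+iξ)(σ-iξ)(κ+iξ)^j)` independently of `l`. -/
theorem laguerre_diagonal_integral (l : ℕ) (j : ℕ) (hj : 1 ≤ j)
    (σ : ℝ) (hσ : 0 < σ) (κ : ℂ) (hκ : 0 < κ.re) :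
    (1 / (2 * (Real.pi : ℂ))) *
      ∫ ξ : ℝ, 1 / (((σ : ℂ) + I * ξ) * ((σ : ℂ) - I * ξ) * (κ + I * ξ) ^ j) =
    1 / (2 * (σ : ℂ) * (κ + (σ : ℂ)) ^ j) := by
  simp only [one_div]
  rw [integral_main σ hσ κ hκ j]
  have hπ : (Real.pi : ℂ) ≠ 0 := by
    exact_mod_cast Real.pi_ne_zero
  have hσ0 : (σ:ℂ) ≠ 0 := by exact_mod_cast hσ.ne'
  have hκσ : κ + (σ:ℂ) ≠ 0 := ne_of_re_pos (by simp [Complex.add_re]; positivity)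
  have hp : ((κ + (σ:ℂ))^j) ≠ 0 := pow_ne_zero _ hκσ
  field_simp
end

section
/- Let a, b, c ∈ ℂ with Re(at² + bt + c) > 0 for every t ∈ ℝ, let k ≥ 1 be an integer, and let σ > 0. For each μ > 0 suppose κ⁺(μ), κ⁻(μ) ∈ ℂ with Re κ⁺(μ) > 0, Re κ⁻(μ) > 0 and aξ² + bξ + c + μ² = a(κ⁺(μ)+iξ)(κ⁻(μ)−iξ) for all ξ ∈ ℝ, and suppose c⁺_j(μ), c⁻_j(μ) ∈ ℂ (1 ≤ j ≤ k) satisfy the partial fraction identity (aξ² + bξ + c + μ²)^{−k} = Σ_{j=1}^k c⁺_j(μ)/(κ⁺(μ)+iξ)^j + Σ_{j=1}^k c⁻_j(μ)/(κ⁻(μ)−iξ)^j for all ξ ∈ ℝ. Then μ^{2k} · ( Σ_{j=1}^k c⁺_j(μ)/(κ⁺(μ)+σ)^j + Σ_{j=1}^k c⁻_j(μ)/(κ⁻(μ)+σ)^j ) → 1 as μ → +∞. -/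
open Complex Filter Polynomial Finset

set_option maxHeartbeats 1000000



private lemma sum_pow_eq_zero {k : ℕ} {v : ℕ → ℂ}
    (h : ∀ w : ℂ, ∑ j ∈ Finset.Icc 1 k, v j * w ^ (k - j) = 0) :
    ∀ j ∈ Finset.Icc 1 k, v j = 0 := by
  have hP : (∑ j ∈ Finset.Icc 1 k, C (v j) * X ^ (k - j) : ℂ[X]) = 0 := by
    apply Polynomial.funext
    intro w
    simpa [Polynomial.eval_finset_sum] using h w
  intro j hj
  obtain ⟨hj1, hjk⟩ := Finset.mem_Icc.mp hj
  have := congrArg (fun p : ℂ[X] => p.coeff (k - j)) hP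
  simp only [Polynomial.finset_sum_coeff, Polynomial.coeff_C_mul, Polynomial.coeff_X_pow,
    Polynomial.coeff_zero] at this
  rw [Finset.sum_eq_single j] at this
  · simpa using this
  · intro i hi hij
    obtain ⟨hi1, hik⟩ := Finset.mem_Icc.mp hi
    have : ¬ (k - j = k - i) := by omega
    simp [this]
  · intro hj'; exact (hj' hj).elim

private lemma coeff_unique (k : ℕ) (S : ℂ) (hS : S ≠ 0) (u v : ℕ → ℂ)
    (h : ∀ w : ℂ, (∑ j ∈ Finset.Icc 1 k, u j * (w ^ (k - j) * (S - w) ^ k)) +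
      (∑ j ∈ Finset.Icc 1 k, v j * (w ^ k * (S - w) ^ (k - j))) = 0) :
    ∀ j ∈ Finset.Icc 1 k, u j = 0 ∧ v j = 0 := by
  set P : ℂ[X] := ∑ j ∈ Finset.Icc 1 k, C (u j) * X ^ (k - j) with hPdef
  set Q : ℂ[X] := ∑ j ∈ Finset.Icc 1 k, C (v j) * (C S - X) ^ (k - j) with hQdef
  have hPQ : P * (C S - X) ^ k + Q * X ^ k = 0 := by
    apply Polynomial.funext
    intro w
    simp only [hPdef, hQdef, Polynomial.eval_add, Polynomial.eval_mul, Polynomial.eval_pow,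
      Polynomial.eval_finset_sum, Polynomial.eval_sub, Polynomial.eval_C, Polynomial.eval_X,
      Polynomial.eval_zero, Finset.sum_mul]
    have := h w
    rw [← this]
    congr 1 <;> exact Finset.sum_congr rfl fun j hj => by ring
  have hcop : IsCoprime ((X : ℂ[X]) ^ k) ((C S - X) ^ k) := by
    apply IsCoprime.pow
    exact ⟨C S⁻¹, C S⁻¹, by
      rw [← mul_add]
      have : (X : ℂ[X]) + (C S - X) = C S := by ring
      rw [this, ← C_mul, inv_mul_cancel₀ hS, C_1]⟩
  have hdvd : (X : ℂ[X]) ^ k ∣ P := by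
    apply hcop.dvd_of_dvd_mul_right
    exact ⟨-Q, by linear_combination hPQ⟩
  have hP0 : P = 0 := by
    by_contra hP
    have h1 : ((X : ℂ[X]) ^ k).natDegree ≤ P.natDegree := Polynomial.natDegree_le_of_dvd hdvd hP
    rw [Polynomial.natDegree_X_pow] at h1
    have h2 : P.natDegree < k := by
      rcases Nat.eq_zero_or_pos k with hk0 | hk0
      · exact absurd (by simp [hPdef, hk0]) hP
      apply Nat.lt_of_le_of_lt (Polynomial.natDegree_sum_le _ _)
      rw [Finset.fold_max_lt]
      constructor
      · omega
      · intro j hj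
        obtain ⟨hj1, hjk⟩ := Finset.mem_Icc.mp hj
        exact lt_of_le_of_lt (Polynomial.natDegree_C_mul_X_pow_le _ _) (by omega)
    omega
  have hQ0 : Q = 0 := by
    have : Q * X ^ k = 0 := by rw [← hPQ, hP0]; ring
    rcases mul_eq_zero.mp this with h' | h'
    · exact h'
    · exact absurd h' (pow_ne_zero _ Polynomial.X_ne_zero)
  have hu : ∀ j ∈ Finset.Icc 1 k, u j = 0 := by
    apply sum_pow_eq_zero
    intro w
    have := congrArg (Polynomial.eval w) hP0
    simpa [hPdef, Polynomial.eval_finset_sum] using this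
  have hv : ∀ j ∈ Finset.Icc 1 k, v j = 0 := by
    apply sum_pow_eq_zero
    intro w
    have := congrArg (Polynomial.eval (S - w)) hQ0
    simp only [hQdef, Polynomial.eval_finset_sum, Polynomial.eval_mul, Polynomial.eval_pow,
      Polynomial.eval_sub, Polynomial.eval_C, Polynomial.eval_X, Polynomial.eval_zero] at this
    simpa using this
  exact fun j hj => ⟨hu j hj, hv j hj⟩


private lemma pf_exists : ∀ n : ℕ, 1 ≤ n → ∀ m : ℕ, 1 ≤ m →
    ∃ e f : ℕ → ℂ, ∀ w : ℂ,
      (∑ j ∈ Finset.Icc 1 m, e j * (w ^ (m - j) * (1 - w) ^ n)) +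
      (∑ j ∈ Finset.Icc 1 n, f j * (w ^ m * (1 - w) ^ (n - j))) = 1 := by
  intro n hn
  induction n, hn using Nat.le_induction with
  | base =>
    intro m hm
    induction m, hm using Nat.le_induction with
    | base =>
      refine ⟨fun _ => 1, fun _ => 1, fun w => ?_⟩
      simp
    | succ m hm ih =>
      obtain ⟨e, f, hef⟩ := ih
      refine ⟨Function.update e (m + 1) 1, f, fun w => ?_⟩
      rw [← Finset.insert_Icc_right_eq_Icc_add_one (by omega), Finset.sum_insert (by simp)]
      have h1 : ∑ j ∈ Finset.Icc 1 m, Function.update e (m + 1) 1 j * (w ^ (m + 1 - j) * (1 - w) ^ 1)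
          = (∑ j ∈ Finset.Icc 1 m, e j * (w ^ (m - j) * (1 - w) ^ 1)) * w := by
        rw [Finset.sum_mul]
        apply Finset.sum_congr rfl
        intro j hj
        obtain ⟨hj1, hjm⟩ := Finset.mem_Icc.mp hj
        rw [Function.update_of_ne (by omega)]
        rw [show m + 1 - j = (m - j) + 1 by omega, pow_succ]
        ring
      rw [h1]
      have h2 : ∑ j ∈ Finset.Icc 1 1, f j * (w ^ (m + 1) * (1 - w) ^ (1 - j))
          = (∑ j ∈ Finset.Icc 1 1, f j * (w ^ m * (1 - w) ^ (1 - j))) * w := by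
        rw [Finset.sum_mul]
        apply Finset.sum_congr rfl
        intro j hj
        rw [pow_succ]
        ring
      rw [h2]
      simp only [Function.update_self, Nat.sub_self, pow_zero]
      linear_combination w * hef w
  | succ n hn ihn =>
    intro m hm
    induction m, hm using Nat.le_induction with
    | base =>
      obtain ⟨e, f, hef⟩ := ihn 1 le_rfl
      refine ⟨e, Function.update f (n + 1) 1, fun w => ?_⟩
      rw [← Finset.insert_Icc_right_eq_Icc_add_one (b := n) (by omega), Finset.sum_insert (by simp)]
      have h2 : ∑ j ∈ Finset.Icc 1 n, Function.update f (n + 1) 1 j * (w ^ 1 * (1 - w) ^ (n + 1 - j))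
          = (∑ j ∈ Finset.Icc 1 n, f j * (w ^ 1 * (1 - w) ^ (n - j))) * (1 - w) := by
        rw [Finset.sum_mul]
        apply Finset.sum_congr rfl
        intro j hj
        obtain ⟨hj1, hjn⟩ := Finset.mem_Icc.mp hj
        rw [Function.update_of_ne (by omega)]
        rw [show n + 1 - j = (n - j) + 1 by omega, pow_succ]
        ring
      rw [h2]
      have h1 : ∑ j ∈ Finset.Icc 1 1, e j * (w ^ (1 - j) * (1 - w) ^ (n + 1))
          = (∑ j ∈ Finset.Icc 1 1, e j * (w ^ (1 - j) * (1 - w) ^ n)) * (1 - w) := by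
        rw [Finset.sum_mul]
        apply Finset.sum_congr rfl
        intro j hj
        rw [pow_succ]
        ring
      rw [h1]
      simp only [Function.update_self, Nat.sub_self, pow_zero]
      linear_combination (1 - w) * hef w
    | succ m hm ihm =>
      obtain ⟨e1, f1, h1⟩ := ihm
      obtain ⟨e2, f2, h2⟩ := ihn (m + 1) (by omega)
      refine ⟨fun j => (if j ≤ m then e1 j else 0) + e2 j,
              fun j => f1 j + (if j ≤ n then f2 j else 0), fun w => ?_⟩
      have key1 : ∑ j ∈ Finset.Icc 1 (m + 1),
          ((if j ≤ m then e1 j else 0) + e2 j) * (w ^ (m + 1 - j) * (1 - w) ^ (n + 1))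
          = (∑ j ∈ Finset.Icc 1 m, e1 j * (w ^ (m - j) * (1 - w) ^ (n + 1))) * w
          + (∑ j ∈ Finset.Icc 1 (m + 1), e2 j * (w ^ (m + 1 - j) * (1 - w) ^ n)) * (1 - w) := by
        simp only [add_mul, Finset.sum_add_distrib]
        congr 1
        · rw [← Finset.insert_Icc_right_eq_Icc_add_one (by omega), Finset.sum_insert (by simp),
            Finset.sum_mul]
          simp only [show ¬ (m + 1 ≤ m) by omega, if_false, zero_mul, zero_add]
          apply Finset.sum_congr rfl
          intro j hj
          obtain ⟨hj1, hjm⟩ := Finset.mem_Icc.mp hj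
          rw [if_pos hjm, show m + 1 - j = (m - j) + 1 by omega, pow_succ]
          ring
        · rw [Finset.sum_mul]
          apply Finset.sum_congr rfl
          intro j hj
          rw [pow_succ]
          ring
      have key2 : ∑ j ∈ Finset.Icc 1 (n + 1),
          (f1 j + if j ≤ n then f2 j else 0) * (w ^ (m + 1) * (1 - w) ^ (n + 1 - j))
          = (∑ j ∈ Finset.Icc 1 (n + 1), f1 j * (w ^ m * (1 - w) ^ (n + 1 - j))) * w
          + (∑ j ∈ Finset.Icc 1 n, f2 j * (w ^ (m + 1) * (1 - w) ^ (n - j))) * (1 - w) := by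
        simp only [add_mul, Finset.sum_add_distrib]
        congr 1
        · rw [Finset.sum_mul]
          apply Finset.sum_congr rfl
          intro j hj
          rw [pow_succ]
          ring
        · rw [← Finset.insert_Icc_right_eq_Icc_add_one (b := n) (by omega), Finset.sum_insert (by simp),
            Finset.sum_mul]
          simp only [show ¬ (n + 1 ≤ n) by omega, if_false, zero_mul, zero_add]
          apply Finset.sum_congr rfl
          intro j hj
          obtain ⟨hj1, hjn⟩ := Finset.mem_Icc.mp hj
          rw [if_pos hjn, show n + 1 - j = (n - j) + 1 by omega, pow_succ]
          ring
      rw [key1, key2]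
      linear_combination w * h1 w + (1 - w) * h2 w


private lemma split_eval {k : ℕ} (A x y : ℂ) (hA : A ≠ 0) (hx : x ≠ 0) (hy : y ≠ 0)
    (u v : ℕ → ℂ)
    (H : (∑ j ∈ Finset.Icc 1 k, u j * A ^ k * (x ^ (k - j) * y ^ k)) +
         (∑ j ∈ Finset.Icc 1 k, v j * A ^ k * (x ^ k * y ^ (k - j))) = 1) :
    (∑ j ∈ Finset.Icc 1 k, u j / x ^ j) + (∑ j ∈ Finset.Icc 1 k, v j / y ^ j) =
      ((A * x * y) ^ k)⁻¹ := by
  have hne : (A * x * y) ^ k ≠ 0 := pow_ne_zero _ (by simp [hA, hx, hy])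
  apply eq_inv_of_mul_eq_one_left
  rw [add_mul, Finset.sum_mul, Finset.sum_mul, ← H]
  congr 1 <;> refine Finset.sum_congr rfl fun j hj => ?_
  · obtain ⟨hj1, hjk⟩ := Finset.mem_Icc.mp hj
    rw [mul_pow, mul_pow, show x ^ k = x ^ (k - j) * x ^ j by
      rw [← pow_add]; congr 1; omega]
    field_simp
  · obtain ⟨hj1, hjk⟩ := Finset.mem_Icc.mp hj
    rw [mul_pow, mul_pow, show y ^ k = y ^ (k - j) * y ^ j by
      rw [← pow_add]; congr 1; omega]
    field_simp

private lemma inv_pow_diff_bound (cc x y : ℂ) (j : ℕ) (hj : 1 ≤ j) (t : ℝ) (ht : 0 < t)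
    (hx : t ≤ ‖x‖) (hy : t ≤ ‖y‖) :
    ‖cc / x ^ j - cc / y ^ j‖ ≤ ‖cc‖ * j * ‖x - y‖ * (1 / t) ^ (j + 1) := by
  have hx0 : x ≠ 0 := by intro h; rw [h, norm_zero] at hx; linarith
  have hy0 : y ≠ 0 := by intro h; rw [h, norm_zero] at hy; linarith
  have hG := geom_sum₂_mul (y⁻¹) (x⁻¹) j
  have hinvdiff : x⁻¹ - y⁻¹ = (y - x) / (x * y) := inv_sub_inv hx0 hy0
  have hkey : cc / x ^ j - cc / y ^ j =
      cc * ((∑ i ∈ Finset.range j, (y⁻¹) ^ i * (x⁻¹) ^ (j - 1 - i)) * (x⁻¹ - y⁻¹)) := by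
    have h2 : (∑ i ∈ Finset.range j, (y⁻¹) ^ i * (x⁻¹) ^ (j - 1 - i)) * (x⁻¹ - y⁻¹)
        = -((∑ i ∈ Finset.range j, (y⁻¹) ^ i * (x⁻¹) ^ (j - 1 - i)) * (y⁻¹ - x⁻¹)) := by ring
    rw [h2, hG]
    rw [div_eq_mul_inv, div_eq_mul_inv, inv_pow, inv_pow]
    ring
  rw [hkey, norm_mul, norm_mul]
  have hb1 : ‖∑ i ∈ Finset.range j, (y⁻¹) ^ i * (x⁻¹) ^ (j - 1 - i)‖ ≤ j * (1 / t) ^ (j - 1) := by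
    refine le_trans (norm_sum_le _ _) ?_
    have : ∀ i ∈ Finset.range j, ‖(y⁻¹) ^ i * (x⁻¹) ^ (j - 1 - i)‖ ≤ (1 / t) ^ (j - 1) := by
      intro i hi
      have hi' : i < j := Finset.mem_range.mp hi
      rw [norm_mul, norm_pow, norm_pow, norm_inv, norm_inv]
      have b1 : ‖y‖⁻¹ ≤ 1 / t := by rw [one_div]; exact inv_anti₀ ht hy
      have b2 : ‖x‖⁻¹ ≤ 1 / t := by rw [one_div]; exact inv_anti₀ ht hx
      calc ‖y‖⁻¹ ^ i * ‖x‖⁻¹ ^ (j - 1 - i) ≤ (1 / t) ^ i * (1 / t) ^ (j - 1 - i) := by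
            apply mul_le_mul (pow_le_pow_left₀ (by positivity) b1 i)
              (pow_le_pow_left₀ (by positivity) b2 _) (by positivity) (by positivity)
        _ = (1 / t) ^ (j - 1) := by rw [← pow_add]; congr 1; omega
    refine le_trans (Finset.sum_le_sum this) ?_
    rw [Finset.sum_const, Finset.card_range, nsmul_eq_mul]
  have hb2 : ‖x⁻¹ - y⁻¹‖ ≤ ‖x - y‖ * (1 / t) ^ 2 := by
    have hxy : (0:ℝ) < ‖x‖ * ‖y‖ := mul_pos (ht.trans_le hx) (ht.trans_le hy)
    rw [hinvdiff, norm_div, norm_mul, div_le_iff₀ hxy, norm_sub_rev]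
    have h1 : (1:ℝ) ≤ (1 / t) ^ 2 * (‖x‖ * ‖y‖) := by
      have h2 : t * t ≤ ‖x‖ * ‖y‖ := mul_le_mul hx hy ht.le (norm_nonneg _)
      have h3 : (1 / t : ℝ) ^ 2 * (t * t) = 1 := by field_simp
      nlinarith [sq_nonneg (1 / t : ℝ)]
    calc ‖x - y‖ = ‖x - y‖ * 1 := (mul_one _).symm
      _ ≤ ‖x - y‖ * ((1 / t) ^ 2 * (‖x‖ * ‖y‖)) := mul_le_mul_of_nonneg_left h1 (norm_nonneg _)
      _ = ‖x - y‖ * (1 / t) ^ 2 * (‖x‖ * ‖y‖) := by ring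
  calc ‖cc‖ * (‖∑ i ∈ Finset.range j, (y⁻¹) ^ i * (x⁻¹) ^ (j - 1 - i)‖ * ‖x⁻¹ - y⁻¹‖)
      ≤ ‖cc‖ * ((j * (1 / t) ^ (j - 1)) * (‖x - y‖ * (1 / t) ^ 2)) := by
        apply mul_le_mul_of_nonneg_left _ (norm_nonneg _)
        exact mul_le_mul hb1 hb2 (norm_nonneg _) (by positivity)
    _ = ‖cc‖ * j * ‖x - y‖ * ((1 / t) ^ (j - 1) * (1 / t) ^ 2) := by ring
    _ = ‖cc‖ * j * ‖x - y‖ * (1 / t) ^ (j + 1) := by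
        rw [← pow_add]; congr 2; omega


private lemma grow_aux {A D C x y μ : ℝ} (hA : 0 < A) (hD : 0 ≤ D) (hC : 0 ≤ C)
    (hx : 0 ≤ x) (hy : y ≤ x + D) (hxy : μ ^ 2 - C ≤ A * (x * y))
    (hμ : 2 * (A + D + 1) + C + 4 ≤ μ) : μ / (2 * (A + D + 1)) ≤ x := by
  by_contra hcon
  push_neg at hcon
  have hμ0 : 0 < μ := by nlinarith
  have hμ2 : 0 < μ ^ 2 := by positivity
  have h1 : A * (x * y) ≤ A * (x * (x + D)) :=
    mul_le_mul_of_nonneg_left (mul_le_mul_of_nonneg_left hy hx) hA.le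
  have hden : (0:ℝ) < 2 * (A + D + 1) := by nlinarith
  have h2 : A * (x * (x + D)) < A * ((μ / (2 * (A + D + 1))) * (μ / (2 * (A + D + 1)) + D)) := by
    apply mul_lt_mul_of_pos_left _ hA
    nlinarith
  set r : ℝ := 1 / (2 * (A + D + 1)) with hr
  have hrμ : μ / (2 * (A + D + 1)) = r * μ := by rw [hr]; ring
  have hAr2 : A * r ^ 2 ≤ 1 / 4 := by
    rw [hr, show A * (1 / (2 * (A + D + 1))) ^ 2 = A / (2 * (A + D + 1)) ^ 2 by rw [div_pow, one_pow, mul_one_div],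
      div_le_div_iff₀ (by positivity) (by norm_num)]
    nlinarith
  have hArD : A * r * D ≤ (A + D + 1) / 2 := by
    rw [hr, show A * (1 / (2 * (A + D + 1))) * D = (A * D) / (2 * (A + D + 1)) by rw [mul_one_div, div_mul_eq_mul_div],
      div_le_div_iff₀ (by positivity) (by norm_num)]
    nlinarith
  have h3 : A * ((r * μ) * (r * μ + D)) = A * r ^ 2 * μ ^ 2 + A * r * D * μ := by ring
  have h4 : A * r ^ 2 * μ ^ 2 ≤ μ ^ 2 / 4 := by
    nlinarith [mul_nonneg (sub_nonneg.mpr hAr2) (sq_nonneg μ)]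
  have h5 : A * r * D * μ ≤ μ ^ 2 / 4 := by
    have ha : (A + D + 1) / 2 ≤ μ / 4 := by linarith
    nlinarith [mul_le_mul_of_nonneg_right hArD hμ0.le,
      mul_le_mul_of_nonneg_right ha hμ0.le]
  have h6 : C ≤ μ ^ 2 / 4 := by
    have ha : C + 4 ≤ μ := by linarith
    nlinarith [mul_le_mul_of_nonneg_right ha hμ0.le, sq_nonneg (C + 4)]
  rw [hrμ] at h2
  linarith [hxy, h1, h2, h4, h5, h6, h3.le, h3.ge]

private lemma tendsto_pow_ratio (K : ℕ) (d : ℂ) :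
    Tendsto (fun μ : ℝ => (μ : ℂ) ^ (2 * K) * (((μ : ℂ) ^ 2 + d)⁻¹) ^ K) atTop (nhds 1) := by
  have hz : Tendsto (fun μ : ℝ => ((μ : ℂ) ^ 2)⁻¹) atTop (nhds 0) := by
    have h1 : Tendsto (fun μ : ℝ => (μ ^ 2)⁻¹) atTop (nhds 0) :=
      (tendsto_pow_atTop (two_ne_zero)).inv_tendsto_atTop
    have h2 := (Complex.continuous_ofReal.tendsto 0).comp h1
    apply h2.congr
    intro μ
    simp [Function.comp]
  have hb : Tendsto (fun μ : ℝ => ((μ : ℂ) ^ 2 + d) * ((μ : ℂ) ^ 2)⁻¹) atTop (nhds 1) := by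
    have h0 : Tendsto (fun μ : ℝ => 1 + d * ((μ : ℂ) ^ 2)⁻¹) atTop (nhds (1 + d * 0)) :=
      tendsto_const_nhds.add (tendsto_const_nhds.mul hz)
    rw [show (1 : ℂ) + d * 0 = 1 by ring] at h0
    apply h0.congr'
    filter_upwards [eventually_ge_atTop 1] with μ hμ
    have hμ0 : ((μ : ℂ)) ^ 2 ≠ 0 := pow_ne_zero _ (Complex.ofReal_ne_zero.mpr (by linarith))
    field_simp
    rw [add_div, div_self hμ0]
  have hinv : Tendsto (fun μ : ℝ => (((μ : ℂ) ^ 2 + d) * ((μ : ℂ) ^ 2)⁻¹)⁻¹) atTop (nhds 1) := by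
    have := hb.inv₀ one_ne_zero
    simpa using this
  have hcong : Tendsto (fun μ : ℝ => (μ : ℂ) ^ 2 * ((μ : ℂ) ^ 2 + d)⁻¹) atTop (nhds 1) := by
    apply hinv.congr
    intro μ
    rw [mul_inv, inv_inv, mul_comm]
  have hp := hcong.pow K
  rw [one_pow] at hp
  apply hp.congr
  intro μ
  rw [mul_pow, ← pow_mul]

/-- Lemma 5.5: the coefficient of `μ^{-2k}` in the expansion of
`α(μ) = q^{∘k,+}_{-2k}(-iσ, μ) + q^{∘k,-}_{-2k}(iσ, μ)` equals `1`, i.e.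
`μ^{2k} α(μ) → 1` as `μ → +∞`. -/
theorem alpha_coefficient_one (a b c : ℂ)
    (h : ∀ t : ℝ, 0 < (a * (t : ℂ) ^ 2 + b * t + c).re)
    (k : ℕ) (hk : 1 ≤ k) (σ : ℝ) (hσ : 0 < σ)
    (κp κm : ℝ → ℂ) (cp cm : ℝ → ℕ → ℂ)
    (hκp : ∀ μ : ℝ, 0 < μ → 0 < (κp μ).re)
    (hκm : ∀ μ : ℝ, 0 < μ → 0 < (κm μ).re)
    (hfact : ∀ μ : ℝ, 0 < μ → ∀ ξ : ℝ,
      a * (ξ : ℂ) ^ 2 + b * ξ + c + (μ : ℂ) ^ 2 = a * (κp μ + I * ξ) * (κm μ - I * ξ))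
    (hpf : ∀ μ : ℝ, 0 < μ → ∀ ξ : ℝ,
      1 / (a * (ξ : ℂ) ^ 2 + b * ξ + c + (μ : ℂ) ^ 2) ^ k =
        (∑ j ∈ Finset.Icc 1 k, cp μ j / (κp μ + I * ξ) ^ j) +
        (∑ j ∈ Finset.Icc 1 k, cm μ j / (κm μ - I * ξ) ^ j)) :
    Tendsto (fun μ : ℝ => (μ : ℂ) ^ (2 * k) *
        ((∑ j ∈ Finset.Icc 1 k, cp μ j / (κp μ + (σ : ℂ)) ^ j) +
         (∑ j ∈ Finset.Icc 1 k, cm μ j / (κm μ + (σ : ℂ)) ^ j)))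
      atTop (nhds 1) := by
  classical
  -- a ≠ 0
  have ha : a ≠ 0 := by
    intro h0
    have h1 := hfact 1 one_pos 0
    rw [h0] at h1
    push_cast at h1
    simp at h1
    have h2 := h 0
    push_cast at h2
    simp at h2
    have h3 : c = -1 := by linear_combination h1
    rw [h3] at h2
    simp at h2
    linarith
  -- relations
  have hrel1 : ∀ μ : ℝ, 0 < μ → a * κp μ * κm μ = c + (μ : ℂ) ^ 2 := by
    intro μ hμ
    have h0 := hfact μ hμ 0
    push_cast at h0
    linear_combination -h0
  have hrel2 : ∀ μ : ℝ, 0 < μ → a * (κm μ - κp μ) = -(I * b) := by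
    intro μ hμ
    have h1 := hfact μ hμ 1
    have h0 := hfact μ hμ 0
    push_cast at h1 h0
    linear_combination I * h1 - I * h0 + (a * (κm μ - κp μ) - I * a) * Complex.I_sq
  have hef' := pf_exists k hk k hk
  obtain ⟨e, f, hef⟩ := hef'
  -- nonvanishing on horizontal/vertical lines
  have hxline : ∀ μ : ℝ, 0 < μ → ∀ ξ : ℝ, κp μ + I * (ξ : ℂ) ≠ 0 := by
    intro μ hμ ξ h0
    have h1 := congrArg Complex.re h0
    simp [Complex.add_re, Complex.mul_re] at h1
    have := hκp μ hμ
    linarith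
  have hyline : ∀ μ : ℝ, 0 < μ → ∀ ξ : ℝ, κm μ - I * (ξ : ℂ) ≠ 0 := by
    intro μ hμ ξ h0
    have h1 := congrArg Complex.re h0
    simp [Complex.sub_re, Complex.mul_re] at h1
    have := hκm μ hμ
    linarith
  -- the extended (polynomial) identity
  have hbig : ∀ μ : ℝ, 0 < μ → ∀ w : ℂ,
      (∑ j ∈ Finset.Icc 1 k, cp μ j * a ^ k * (w ^ (k - j) * (κp μ + κm μ - w) ^ k)) +
      (∑ j ∈ Finset.Icc 1 k, cm μ j * a ^ k * (w ^ k * (κp μ + κm μ - w) ^ (k - j))) = 1 := by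
    intro μ hμ
    set P : Polynomial ℂ :=
      (∑ j ∈ Finset.Icc 1 k, Polynomial.C (cp μ j * a ^ k) *
        (Polynomial.X ^ (k - j) * (Polynomial.C (κp μ + κm μ) - Polynomial.X) ^ k)) +
      (∑ j ∈ Finset.Icc 1 k, Polynomial.C (cm μ j * a ^ k) *
        (Polynomial.X ^ k * (Polynomial.C (κp μ + κm μ) - Polynomial.X) ^ (k - j))) -
      Polynomial.C 1 with hPdef
    have heval : ∀ w : ℂ, P.eval w =
        (∑ j ∈ Finset.Icc 1 k, cp μ j * a ^ k * (w ^ (k - j) * (κp μ + κm μ - w) ^ k)) +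
        (∑ j ∈ Finset.Icc 1 k, cm μ j * a ^ k * (w ^ k * (κp μ + κm μ - w) ^ (k - j))) - 1 := by
      intro w
      simp [hPdef, Polynomial.eval_finset_sum]
    have hroot : ∀ ξ : ℝ, P.IsRoot (κp μ + I * ξ) := by
      intro ξ
      have hx := hxline μ hμ ξ
      have hy := hyline μ hμ ξ
      have hq := hfact μ hμ ξ
      have hpf' := hpf μ hμ ξ
      rw [hq] at hpf'
      have hxyne : a * (κp μ + I * ξ) * (κm μ - I * ξ) ≠ 0 :=
        mul_ne_zero (mul_ne_zero ha hx) hy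
      unfold Polynomial.IsRoot
      rw [heval]
      have hSw : κp μ + κm μ - (κp μ + I * ξ) = κm μ - I * ξ := by ring
      rw [hSw]
      have hmul := congrArg (fun z => z * (a * (κp μ + I * ξ) * (κm μ - I * ξ)) ^ k) hpf'
      rw [div_mul_cancel₀ _ (pow_ne_zero _ hxyne), add_mul, Finset.sum_mul, Finset.sum_mul]
        at hmul
      have ht1 : ∑ j ∈ Finset.Icc 1 k,
          cp μ j / (κp μ + I * ξ) ^ j * (a * (κp μ + I * ξ) * (κm μ - I * ξ)) ^ k =
          ∑ j ∈ Finset.Icc 1 k,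
          cp μ j * a ^ k * ((κp μ + I * ξ) ^ (k - j) * (κm μ - I * ξ) ^ k) := by
        refine Finset.sum_congr rfl fun j hj => ?_
        obtain ⟨hj1, hjk⟩ := Finset.mem_Icc.mp hj
        rw [mul_pow, mul_pow,
          show (κp μ + I * (ξ:ℂ)) ^ k = (κp μ + I * ξ) ^ (k - j) * (κp μ + I * ξ) ^ j by
            rw [← pow_add]; congr 1; omega]
        field_simp
      have ht2 : ∑ j ∈ Finset.Icc 1 k,
          cm μ j / (κm μ - I * ξ) ^ j * (a * (κp μ + I * ξ) * (κm μ - I * ξ)) ^ k =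
          ∑ j ∈ Finset.Icc 1 k,
          cm μ j * a ^ k * ((κp μ + I * ξ) ^ k * (κm μ - I * ξ) ^ (k - j)) := by
        refine Finset.sum_congr rfl fun j hj => ?_
        obtain ⟨hj1, hjk⟩ := Finset.mem_Icc.mp hj
        rw [mul_pow, mul_pow,
          show (κm μ - I * (ξ:ℂ)) ^ k = (κm μ - I * ξ) ^ (k - j) * (κm μ - I * ξ) ^ j by
            rw [← pow_add]; congr 1; omega]
        field_simp
      rw [ht1, ht2] at hmul
      linear_combination -hmul
    have hP0 : P = 0 := by
      apply Polynomial.eq_zero_of_infinite_isRoot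
      apply Set.Infinite.mono (s := Set.range fun ξ : ℝ => κp μ + I * (ξ : ℂ))
      · rintro z ⟨ξ, rfl⟩
        exact hroot ξ
      · apply Set.infinite_range_of_injective
        intro x y hxy
        have h1 := add_left_cancel hxy
        have h2 := mul_left_cancel₀ I_ne_zero h1
        exact_mod_cast h2
    intro w
    have := congrArg (Polynomial.eval w) hP0
    rw [heval] at this
    simp only [Polynomial.eval_zero] at this
    linear_combination this
  -- exact coefficients via uniqueness
  have hcoeff : ∀ μ : ℝ, 0 < μ → κp μ + κm μ ≠ 0 → ∀ j ∈ Finset.Icc 1 k,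
      cp μ j * a ^ k = e j * (κp μ + κm μ) ^ j * (((κp μ + κm μ) ^ (2 * k))⁻¹) ∧
      cm μ j * a ^ k = f j * (κp μ + κm μ) ^ j * (((κp μ + κm μ) ^ (2 * k))⁻¹) := by
    intro μ hμ hS0
    have hscaled : ∀ z : ℂ,
        (∑ j ∈ Finset.Icc 1 k, e j * (κp μ + κm μ) ^ j *
          (z ^ (k - j) * (κp μ + κm μ - z) ^ k)) +
        (∑ j ∈ Finset.Icc 1 k, f j * (κp μ + κm μ) ^ j *
          (z ^ k * (κp μ + κm μ - z) ^ (k - j))) = (κp μ + κm μ) ^ (2 * k) := by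
      intro z
      have h0 := hef (z / (κp μ + κm μ))
      have hmul := congrArg (fun t => t * (κp μ + κm μ) ^ (2 * k)) h0
      rw [add_mul, Finset.sum_mul, Finset.sum_mul, one_mul] at hmul
      rw [← hmul]
      congr 1
      · refine Finset.sum_congr rfl fun j hj => ?_
        obtain ⟨hj1, hjk⟩ := Finset.mem_Icc.mp hj
        have h1 : (1 : ℂ) - z / (κp μ + κm μ) = (κp μ + κm μ - z) / (κp μ + κm μ) := by
          field_simp
        rw [h1, div_pow, div_pow,
          show (κp μ + κm μ) ^ (2 * k)
              = (κp μ + κm μ) ^ (k - j) * (κp μ + κm μ) ^ k * (κp μ + κm μ) ^ j by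
            rw [← pow_add, ← pow_add]; congr 1; omega]
        field_simp
      · refine Finset.sum_congr rfl fun j hj => ?_
        obtain ⟨hj1, hjk⟩ := Finset.mem_Icc.mp hj
        have h1 : (1 : ℂ) - z / (κp μ + κm μ) = (κp μ + κm μ - z) / (κp μ + κm μ) := by
          field_simp
        rw [h1, div_pow, div_pow,
          show (κp μ + κm μ) ^ (2 * k)
              = (κp μ + κm μ) ^ (k - j) * (κp μ + κm μ) ^ k * (κp μ + κm μ) ^ j by
            rw [← pow_add, ← pow_add]; congr 1; omega]
        field_simp
    have hzero : ∀ w : ℂ, (∑ j ∈ Finset.Icc 1 k,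
          (cp μ j * a ^ k - e j * (κp μ + κm μ) ^ j * (((κp μ + κm μ) ^ (2 * k))⁻¹)) *
            (w ^ (k - j) * (κp μ + κm μ - w) ^ k)) +
        (∑ j ∈ Finset.Icc 1 k,
          (cm μ j * a ^ k - f j * (κp μ + κm μ) ^ j * (((κp μ + κm μ) ^ (2 * k))⁻¹)) *
            (w ^ k * (κp μ + κm μ - w) ^ (k - j))) = 0 := by
      intro w
      have h1 := hbig μ hμ w
      have h2 := hscaled w
      have h3 : (((κp μ + κm μ) ^ (2 * k))⁻¹) * (κp μ + κm μ) ^ (2 * k) = 1 :=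
        inv_mul_cancel₀ (pow_ne_zero _ hS0)
      have e1 : ∑ j ∈ Finset.Icc 1 k,
          e j * (κp μ + κm μ) ^ j * (((κp μ + κm μ) ^ (2 * k))⁻¹) *
            (w ^ (k - j) * (κp μ + κm μ - w) ^ k)
          = (∑ j ∈ Finset.Icc 1 k, e j * (κp μ + κm μ) ^ j *
              (w ^ (k - j) * (κp μ + κm μ - w) ^ k)) * (((κp μ + κm μ) ^ (2 * k))⁻¹) := by
        rw [Finset.sum_mul]; exact Finset.sum_congr rfl fun j _ => by ring
      have e2 : ∑ j ∈ Finset.Icc 1 k,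
          f j * (κp μ + κm μ) ^ j * (((κp μ + κm μ) ^ (2 * k))⁻¹) *
            (w ^ k * (κp μ + κm μ - w) ^ (k - j))
          = (∑ j ∈ Finset.Icc 1 k, f j * (κp μ + κm μ) ^ j *
              (w ^ k * (κp μ + κm μ - w) ^ (k - j))) * (((κp μ + κm μ) ^ (2 * k))⁻¹) := by
        rw [Finset.sum_mul]; exact Finset.sum_congr rfl fun j _ => by ring
      simp only [sub_mul]
      rw [Finset.sum_sub_distrib, Finset.sum_sub_distrib, e1, e2]
      linear_combination h1 - (((κp μ + κm μ) ^ (2 * k))⁻¹) * h2 - h3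
    intro j hj
    obtain ⟨h1, h2⟩ := coeff_unique k (κp μ + κm μ) hS0 _ _ hzero j hj
    exact ⟨by linear_combination h1, by linear_combination h2⟩
  -- constants
  have hA0 : 0 < ‖a‖ := norm_pos_iff.mpr ha
  set A := ‖a‖ with hA
  set d : ℂ := -(I * b) / a with hd
  have hκmd : ∀ μ : ℝ, 0 < μ → κm μ = κp μ + d := by
    intro μ hμ
    have h2 := hrel2 μ hμ
    rw [hd]
    field_simp
    linear_combination h2
  set Dn := ‖d‖ with hDn
  have hDn0 : (0:ℝ) ≤ Dn := norm_nonneg d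
  set Cc := ‖c‖ with hCc
  set W := 2 * (A + Dn + 1) with hW
  have hW0 : 0 < W := by rw [hW]; positivity
  have hprod : ∀ μ : ℝ, 0 < μ → μ ^ 2 - Cc ≤ A * (‖κp μ‖ * ‖κm μ‖) := by
    intro μ hμ
    have h1 := congrArg (fun z : ℂ => ‖z‖) (hrel1 μ hμ)
    simp only [norm_mul] at h1
    have h4 : A * (‖κp μ‖ * ‖κm μ‖) = ‖c + ((μ:ℝ):ℂ) ^ 2‖ := by
      rw [← mul_assoc]; exact h1
    have h2 : ‖((μ:ℝ):ℂ) ^ 2‖ ≤ ‖c + ((μ:ℝ):ℂ) ^ 2‖ + ‖c‖ := by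
      calc ‖((μ:ℝ):ℂ) ^ 2‖ = ‖(c + ((μ:ℝ):ℂ) ^ 2) - c‖ := by congr 1; ring
        _ ≤ ‖c + ((μ:ℝ):ℂ) ^ 2‖ + ‖c‖ := norm_sub_le _ _
    have h3 : ‖((μ:ℝ):ℂ) ^ 2‖ = μ ^ 2 := by
      rw [norm_pow, Complex.norm_real, Real.norm_eq_abs, abs_of_pos hμ]
    rw [h3] at h2
    rw [h4, hCc]
    linarith
  have hgood : ∀ᶠ μ : ℝ in atTop, 0 < μ ∧ 1 ≤ μ ∧ μ / W ≤ ‖κp μ‖ ∧ μ / W ≤ ‖κm μ‖ ∧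
      μ / W ≤ ‖κp μ + κm μ‖ ∧ Dn + 4 * σ + 4 ≤ μ / W := by
    filter_upwards [eventually_ge_atTop
      (max (2 * (A + Dn + 1) + Cc + 4) (max (W * (Dn + 4 * σ + 4)) 1))] with μ hμ
    have hμ1 : 1 ≤ μ := le_trans (le_max_of_le_right (le_max_right _ _)) hμ
    have hμ0 : 0 < μ := lt_of_lt_of_le zero_lt_one hμ1
    have hμg : 2 * (A + Dn + 1) + Cc + 4 ≤ μ := le_trans (le_max_left _ _) hμ
    have hμW : W * (Dn + 4 * σ + 4) ≤ μ := le_trans (le_max_of_le_right (le_max_left _ _)) hμ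
    have hlast : Dn + 4 * σ + 4 ≤ μ / W := by
      rw [le_div_iff₀ hW0]
      calc (Dn + 4 * σ + 4) * W = W * (Dn + 4 * σ + 4) := by ring
        _ ≤ μ := hμW
    have hp : μ / W ≤ ‖κp μ‖ := by
      rw [hW]
      apply grow_aux hA0 hDn0 (norm_nonneg c) (norm_nonneg _) _ (hprod μ hμ0) hμg
      rw [hκmd μ hμ0]
      exact norm_add_le _ _
    have hm : μ / W ≤ ‖κm μ‖ := by
      rw [hW]
      have hy' : ‖κp μ‖ ≤ ‖κm μ‖ + Dn := by
        rw [show κp μ = κm μ - d by rw [hκmd μ hμ0]; ring]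
        exact norm_sub_le _ _
      have hxy' : μ ^ 2 - Cc ≤ A * (‖κm μ‖ * ‖κp μ‖) := by
        rw [mul_comm (‖κm μ‖)]
        exact hprod μ hμ0
      exact grow_aux hA0 hDn0 (norm_nonneg c) (norm_nonneg _) hy' hxy' hμg
    have hs : μ / W ≤ ‖κp μ + κm μ‖ := by
      have h2 : ‖(2:ℂ) * κp μ‖ ≤ ‖κp μ + κm μ‖ + ‖d‖ := by
        calc ‖(2:ℂ) * κp μ‖ = ‖(κp μ + κm μ) - d‖ := by
              congr 1; rw [hκmd μ hμ0]; ring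
          _ ≤ ‖κp μ + κm μ‖ + ‖d‖ := norm_sub_le _ _
      have h3 : ‖(2:ℂ) * κp μ‖ = 2 * ‖κp μ‖ := by
        rw [norm_mul]
        norm_num
      have h4 : Dn ≤ μ / W := by linarith
      rw [← hDn] at h2
      linarith
    exact ⟨hμ0, hμ1, hp, hm, hs, hlast⟩
  set d1 : ℂ := c - a * (σ:ℂ) ^ 2 - I * b * σ with hd1
  set d2 : ℂ := c - a * (σ:ℂ) ^ 2 + I * b * σ with hd2
  -- main eventual identity
  have hmain : ∀ᶠ μ : ℝ in atTop, (μ:ℂ) ^ (2*k) *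
      ((∑ j ∈ Finset.Icc 1 k, cp μ j / (κp μ + (σ:ℂ)) ^ j) +
       (∑ j ∈ Finset.Icc 1 k, cm μ j / (κm μ + (σ:ℂ)) ^ j))
      = ((μ:ℂ)^(2*k) * ((((μ:ℂ)^2 + d1) ^ k)⁻¹) + (μ:ℂ)^(2*k) * ((((μ:ℂ)^2 + d2) ^ k)⁻¹) +
         ∑ j ∈ Finset.Icc 1 k, (μ:ℂ)^(2*k) *
           (cp μ j / (κp μ + (σ:ℂ)) ^ j - cp μ j / (κp μ - (σ:ℂ)) ^ j +
            (cm μ j / (κm μ + (σ:ℂ)) ^ j - cm μ j / (κm μ - (σ:ℂ)) ^ j))) / 2 := by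
    filter_upwards [hgood] with μ hg
    obtain ⟨hμ0, hμ1, hp, hm, hs, hlast⟩ := hg
    have htW : 0 < μ / W := div_pos hμ0 hW0
    have hσn : ‖((σ:ℝ):ℂ)‖ = σ := by
      rw [Complex.norm_real, Real.norm_eq_abs, abs_of_pos hσ]
    have hxp : κp μ + (σ:ℂ) ≠ 0 := by
      intro h0
      have h1 : ‖κp μ‖ = σ := by
        rw [show κp μ = -(σ:ℂ) by linear_combination h0, norm_neg, hσn]
      linarith
    have hxm : κp μ - (σ:ℂ) ≠ 0 := by
      intro h0
      have h1 : ‖κp μ‖ = σ := by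
        rw [show κp μ = (σ:ℂ) by linear_combination h0, hσn]
      linarith
    have hyp : κm μ + (σ:ℂ) ≠ 0 := by
      intro h0
      have h1 : ‖κm μ‖ = σ := by
        rw [show κm μ = -(σ:ℂ) by linear_combination h0, norm_neg, hσn]
      linarith
    have hym : κm μ - (σ:ℂ) ≠ 0 := by
      intro h0
      have h1 : ‖κm μ‖ = σ := by
        rw [show κm μ = (σ:ℂ) by linear_combination h0, hσn]
      linarith
    have hB1 : (∑ j ∈ Finset.Icc 1 k, cp μ j / (κp μ + (σ:ℂ)) ^ j) +
        (∑ j ∈ Finset.Icc 1 k, cm μ j / (κm μ - (σ:ℂ)) ^ j)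
        = ((((μ:ℂ)^2 + d1)) ^ k)⁻¹ := by
      have hb := hbig μ hμ0 (κp μ + (σ:ℂ))
      rw [show κp μ + κm μ - (κp μ + (σ:ℂ)) = κm μ - (σ:ℂ) by ring] at hb
      have hse := split_eval a (κp μ + (σ:ℂ)) (κm μ - (σ:ℂ)) ha hxp hym (cp μ) (cm μ) hb
      rw [show a * (κp μ + (σ:ℂ)) * (κm μ - (σ:ℂ)) = ((μ:ℂ)^2 + d1) by
        rw [hd1]; linear_combination (hrel1 μ hμ0) + ((σ:ℝ):ℂ) * (hrel2 μ hμ0)] at hse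
      exact hse
    have hB2 : (∑ j ∈ Finset.Icc 1 k, cp μ j / (κp μ - (σ:ℂ)) ^ j) +
        (∑ j ∈ Finset.Icc 1 k, cm μ j / (κm μ + (σ:ℂ)) ^ j)
        = ((((μ:ℂ)^2 + d2)) ^ k)⁻¹ := by
      have hb := hbig μ hμ0 (κp μ - (σ:ℂ))
      rw [show κp μ + κm μ - (κp μ - (σ:ℂ)) = κm μ + (σ:ℂ) by ring] at hb
      have hse := split_eval a (κp μ - (σ:ℂ)) (κm μ + (σ:ℂ)) ha hxm hyp (cp μ) (cm μ) hb
      rw [show a * (κp μ - (σ:ℂ)) * (κm μ + (σ:ℂ)) = ((μ:ℂ)^2 + d2) by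
        rw [hd2]; linear_combination (hrel1 μ hμ0) - ((σ:ℝ):ℂ) * (hrel2 μ hμ0)] at hse
      exact hse
    have hGsum : ∑ j ∈ Finset.Icc 1 k, (μ:ℂ)^(2*k) *
        (cp μ j / (κp μ + (σ:ℂ)) ^ j - cp μ j / (κp μ - (σ:ℂ)) ^ j +
         (cm μ j / (κm μ + (σ:ℂ)) ^ j - cm μ j / (κm μ - (σ:ℂ)) ^ j))
        = (μ:ℂ)^(2*k) *
          (((∑ j ∈ Finset.Icc 1 k, cp μ j / (κp μ + (σ:ℂ)) ^ j) -
            (∑ j ∈ Finset.Icc 1 k, cp μ j / (κp μ - (σ:ℂ)) ^ j)) +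
           ((∑ j ∈ Finset.Icc 1 k, cm μ j / (κm μ + (σ:ℂ)) ^ j) -
            (∑ j ∈ Finset.Icc 1 k, cm μ j / (κm μ - (σ:ℂ)) ^ j))) := by
      rw [← Finset.mul_sum]
      congr 1
      rw [Finset.sum_add_distrib, Finset.sum_sub_distrib, Finset.sum_sub_distrib]
    rw [hGsum]
    set M := (μ:ℂ)^(2*k) with hM
    set Sa := ∑ j ∈ Finset.Icc 1 k, cp μ j / (κp μ + (σ:ℂ)) ^ j with hSa
    set Sa' := ∑ j ∈ Finset.Icc 1 k, cp μ j / (κp μ - (σ:ℂ)) ^ j with hSa'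
    set Sb := ∑ j ∈ Finset.Icc 1 k, cm μ j / (κm μ + (σ:ℂ)) ^ j with hSb
    set Sb' := ∑ j ∈ Finset.Icc 1 k, cm μ j / (κm μ - (σ:ℂ)) ^ j with hSb'
    set i1 := (((μ:ℂ)^2 + d1) ^ k)⁻¹ with hi1
    set i2 := (((μ:ℂ)^2 + d2) ^ k)⁻¹ with hi2
    linear_combination (M/2) * hB1 + (M/2) * hB2
  -- limits
  have hL1 : Tendsto (fun μ : ℝ => (μ:ℂ)^(2*k) * ((((μ:ℂ)^2 + d1) ^ k)⁻¹)) atTop (nhds 1) := by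
    apply (tendsto_pow_ratio k d1).congr
    intro μ
    rw [inv_pow]
  have hL2 : Tendsto (fun μ : ℝ => (μ:ℂ)^(2*k) * ((((μ:ℂ)^2 + d2) ^ k)⁻¹)) atTop (nhds 1) := by
    apply (tendsto_pow_ratio k d2).congr
    intro μ
    rw [inv_pow]
  have hL3 : Tendsto (fun μ : ℝ => ∑ j ∈ Finset.Icc 1 k, (μ:ℂ)^(2*k) *
      (cp μ j / (κp μ + (σ:ℂ)) ^ j - cp μ j / (κp μ - (σ:ℂ)) ^ j +
       (cm μ j / (κm μ + (σ:ℂ)) ^ j - cm μ j / (κm μ - (σ:ℂ)) ^ j))) atTop (nhds 0) := by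
    have h0 : (0:ℂ) = ∑ j ∈ Finset.Icc 1 k, (0:ℂ) := by simp
    rw [h0]
    apply tendsto_finset_sum
    intro j hj
    obtain ⟨hj1, hjk⟩ := Finset.mem_Icc.mp hj
    apply squeeze_zero_norm' (a := fun μ : ℝ =>
      ((‖e j‖ + ‖f j‖) / A ^ k * W ^ (2*k - j) * (j:ℝ) * (2*σ) * (2*W)^(j+1)) / μ)
    · filter_upwards [hgood] with μ hg
      obtain ⟨hμ0, hμ1, hp, hm, hs, hlast⟩ := hg
      have htW : 0 < μ / W := div_pos hμ0 hW0
      have htW2 : 0 < μ / W / 2 := div_pos htW (by norm_num)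
      have hσn : ‖((σ:ℝ):ℂ)‖ = σ := by
        rw [Complex.norm_real, Real.norm_eq_abs, abs_of_pos hσ]
      have hS0 : κp μ + κm μ ≠ 0 := by
        intro h0'
        rw [h0', norm_zero] at hs
        linarith
      obtain ⟨hc1, hc2⟩ := hcoeff μ hμ0 hS0 j (Finset.mem_Icc.mpr ⟨hj1, hjk⟩)
      have hSnorm : 0 < ‖κp μ + κm μ‖ := lt_of_lt_of_le htW hs
      have hAk : (0:ℝ) < A ^ k := pow_pos hA0 k
      -- coefficient norms
      have hnormS : ‖κp μ + κm μ‖ ^ j * ((‖κp μ + κm μ‖ ^ (2*k))⁻¹)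
          = (‖κp μ + κm μ‖ ^ (2*k - j))⁻¹ := by
        rw [show 2*k = j + (2*k - j) by omega, pow_add, mul_inv, ← mul_assoc,
          mul_inv_cancel₀ (pow_ne_zero _ hSnorm.ne'), one_mul,
          show j + (2*k - j) - j = 2*k - j by omega]
      have hSpow : (‖κp μ + κm μ‖ ^ (2*k - j))⁻¹ ≤ (W / μ) ^ (2*k - j) := by
        rw [show ((W:ℝ) / μ) ^ (2*k - j) = ((μ / W) ^ (2*k - j))⁻¹ by
          rw [← inv_pow, inv_div]]
        exact inv_anti₀ (pow_pos htW _) (pow_le_pow_left₀ htW.le hs _)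
      have hcpn : ‖cp μ j‖ ≤ (‖e j‖ / A ^ k) * (W / μ) ^ (2*k - j) := by
        have h1 := congrArg (fun z : ℂ => ‖z‖) hc1
        simp only [norm_mul, norm_pow, norm_inv] at h1
        rw [← hA] at h1
        have h2 : ‖cp μ j‖ = (‖e j‖ * (‖κp μ + κm μ‖ ^ (2*k - j))⁻¹) / A ^ k := by
          rw [← hnormS, eq_div_iff (ne_of_gt hAk), ← mul_assoc]
          exact h1
        rw [h2, div_mul_eq_mul_div, div_le_div_iff₀ hAk hAk]
        have h3 := mul_le_mul_of_nonneg_left hSpow (norm_nonneg (e j))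
        nlinarith [hAk, norm_nonneg (e j)]
      have hcmn : ‖cm μ j‖ ≤ (‖f j‖ / A ^ k) * (W / μ) ^ (2*k - j) := by
        have h1 := congrArg (fun z : ℂ => ‖z‖) hc2
        simp only [norm_mul, norm_pow, norm_inv] at h1
        rw [← hA] at h1
        have h2 : ‖cm μ j‖ = (‖f j‖ * (‖κp μ + κm μ‖ ^ (2*k - j))⁻¹) / A ^ k := by
          rw [← hnormS, eq_div_iff (ne_of_gt hAk), ← mul_assoc]
          exact h1
        rw [h2, div_mul_eq_mul_div, div_le_div_iff₀ hAk hAk]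
        have h3 := mul_le_mul_of_nonneg_left hSpow (norm_nonneg (f j))
        nlinarith [hAk, norm_nonneg (f j)]
      -- shifted lower bounds
      have hshift : ∀ z : ℂ, μ / W ≤ ‖z‖ → ∀ s : ℂ, ‖s‖ = σ → μ / W / 2 ≤ ‖z + s‖ := by
        intro z hz s hsn
        have h1 : ‖z‖ ≤ ‖z + s‖ + σ := by
          calc ‖z‖ = ‖(z + s) - s‖ := by congr 1; ring
            _ ≤ ‖z + s‖ + ‖s‖ := norm_sub_le _ _
            _ = ‖z + s‖ + σ := by rw [hsn]
        linarith
      have hτp : μ / W / 2 ≤ ‖κp μ + (σ:ℂ)‖ := hshift (κp μ) hp ((σ:ℝ):ℂ) hσn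
      have hτp' : μ / W / 2 ≤ ‖κp μ - (σ:ℂ)‖ := by
        rw [sub_eq_add_neg]
        exact hshift (κp μ) hp (-((σ:ℝ):ℂ)) (by rw [norm_neg, hσn])
      have hτm : μ / W / 2 ≤ ‖κm μ + (σ:ℂ)‖ := hshift (κm μ) hm ((σ:ℝ):ℂ) hσn
      have hτm' : μ / W / 2 ≤ ‖κm μ - (σ:ℂ)‖ := by
        rw [sub_eq_add_neg]
        exact hshift (κm μ) hm (-((σ:ℝ):ℂ)) (by rw [norm_neg, hσn])
      have h2σ : ‖(κp μ + (σ:ℂ)) - (κp μ - (σ:ℂ))‖ = 2*σ := by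
        rw [show (κp μ + (σ:ℂ)) - (κp μ - (σ:ℂ)) = ((2*σ:ℝ):ℂ) by push_cast; ring,
          Complex.norm_real, Real.norm_eq_abs, abs_of_pos (by linarith)]
      have h2σ' : ‖(κm μ + (σ:ℂ)) - (κm μ - (σ:ℂ))‖ = 2*σ := by
        rw [show (κm μ + (σ:ℂ)) - (κm μ - (σ:ℂ)) = ((2*σ:ℝ):ℂ) by push_cast; ring,
          Complex.norm_real, Real.norm_eq_abs, abs_of_pos (by linarith)]
      have hinvτ : (1/(μ/W/2) : ℝ) = 2*W/μ := by
        rw [div_div, one_div, inv_div, mul_comm W 2]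
      have hWμnn : (0:ℝ) ≤ 2*W/μ := div_nonneg (by linarith) hμ0.le
      have hd1b : ‖cp μ j / (κp μ + (σ:ℂ)) ^ j - cp μ j / (κp μ - (σ:ℂ)) ^ j‖ ≤
          ((‖e j‖ / A ^ k) * (W / μ) ^ (2*k - j)) * j * (2*σ) * (2*W/μ) ^ (j+1) := by
        have hb := inv_pow_diff_bound (cp μ j) (κp μ + (σ:ℂ)) (κp μ - (σ:ℂ)) j hj1
          (μ/W/2) htW2 hτp hτp'
        rw [h2σ, hinvτ] at hb
        refine le_trans hb ?_
        have hfac : (0:ℝ) ≤ (j:ℝ) * (2*σ) * (2*W/μ)^(j+1) := by positivity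
        calc ‖cp μ j‖ * (j:ℝ) * (2*σ) * (2*W/μ)^(j+1)
            = ‖cp μ j‖ * ((j:ℝ) * (2*σ) * (2*W/μ)^(j+1)) := by ring
          _ ≤ ((‖e j‖ / A ^ k) * (W / μ) ^ (2*k - j)) * ((j:ℝ) * (2*σ) * (2*W/μ)^(j+1)) :=
              mul_le_mul_of_nonneg_right hcpn hfac
          _ = ((‖e j‖ / A ^ k) * (W / μ) ^ (2*k - j)) * j * (2*σ) * (2*W/μ)^(j+1) := by ring
      have hd2b : ‖cm μ j / (κm μ + (σ:ℂ)) ^ j - cm μ j / (κm μ - (σ:ℂ)) ^ j‖ ≤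
          ((‖f j‖ / A ^ k) * (W / μ) ^ (2*k - j)) * j * (2*σ) * (2*W/μ) ^ (j+1) := by
        have hb := inv_pow_diff_bound (cm μ j) (κm μ + (σ:ℂ)) (κm μ - (σ:ℂ)) j hj1
          (μ/W/2) htW2 hτm hτm'
        rw [h2σ', hinvτ] at hb
        refine le_trans hb ?_
        have hfac : (0:ℝ) ≤ (j:ℝ) * (2*σ) * (2*W/μ)^(j+1) := by positivity
        calc ‖cm μ j‖ * (j:ℝ) * (2*σ) * (2*W/μ)^(j+1)
            = ‖cm μ j‖ * ((j:ℝ) * (2*σ) * (2*W/μ)^(j+1)) := by ring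
          _ ≤ ((‖f j‖ / A ^ k) * (W / μ) ^ (2*k - j)) * ((j:ℝ) * (2*σ) * (2*W/μ)^(j+1)) :=
              mul_le_mul_of_nonneg_right hcmn hfac
          _ = ((‖f j‖ / A ^ k) * (W / μ) ^ (2*k - j)) * j * (2*σ) * (2*W/μ)^(j+1) := by ring
      have harith : μ^(2*k) * (((‖e j‖ + ‖f j‖) / A ^ k * (W / μ) ^ (2*k - j)) * j * (2*σ) * (2*W/μ) ^ (j+1))
          = ((‖e j‖ + ‖f j‖) / A ^ k * W ^ (2*k - j) * (j:ℝ) * (2*σ) * (2*W)^(j+1)) / μ := by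
        have hsplit : μ ^ (2*k - j) * μ ^ (j+1) = μ ^ (2*k) * μ := by
          rw [← pow_add, show 2*k - j + (j+1) = 2*k + 1 by omega, pow_succ]
        have hne2k : (μ:ℝ) ^ (2*k) ≠ 0 := pow_ne_zero _ (ne_of_gt hμ0)
        rw [div_pow, div_pow]
        calc μ^(2*k) * ((‖e j‖ + ‖f j‖) / A ^ k * (W ^ (2*k-j) / μ ^ (2*k-j)) * j * (2*σ) *
              ((2*W) ^ (j+1) / μ ^ (j+1)))
            = ((‖e j‖ + ‖f j‖) / A ^ k * W ^ (2*k-j) * (j:ℝ) * (2*σ) * (2*W) ^ (j+1)) *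
              (μ^(2*k) / (μ ^ (2*k-j) * μ ^ (j+1))) := by ring
          _ = ((‖e j‖ + ‖f j‖) / A ^ k * W ^ (2*k-j) * (j:ℝ) * (2*σ) * (2*W) ^ (j+1)) *
              (μ^(2*k) / (μ^(2*k) * μ)) := by rw [hsplit]
          _ = ((‖e j‖ + ‖f j‖) / A ^ k * W ^ (2*k-j) * (j:ℝ) * (2*σ) * (2*W) ^ (j+1)) / μ := by
              rw [div_mul_eq_div_div, div_self hne2k, one_div, ← div_eq_mul_inv]
      calc ‖(μ:ℂ)^(2*k) *
          (cp μ j / (κp μ + (σ:ℂ)) ^ j - cp μ j / (κp μ - (σ:ℂ)) ^ j +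
           (cm μ j / (κm μ + (σ:ℂ)) ^ j - cm μ j / (κm μ - (σ:ℂ)) ^ j))‖
          = μ^(2*k) * ‖cp μ j / (κp μ + (σ:ℂ)) ^ j - cp μ j / (κp μ - (σ:ℂ)) ^ j +
           (cm μ j / (κm μ + (σ:ℂ)) ^ j - cm μ j / (κm μ - (σ:ℂ)) ^ j)‖ := by
            rw [norm_mul, norm_pow, Complex.norm_real, Real.norm_eq_abs, abs_of_pos hμ0]
        _ ≤ μ^(2*k) * ((((‖e j‖ / A ^ k) * (W / μ) ^ (2*k - j)) * j * (2*σ) * (2*W/μ) ^ (j+1)) +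
            (((‖f j‖ / A ^ k) * (W / μ) ^ (2*k - j)) * j * (2*σ) * (2*W/μ) ^ (j+1))) := by
            apply mul_le_mul_of_nonneg_left _ (by positivity)
            exact le_trans (norm_add_le _ _) (add_le_add hd1b hd2b)
        _ = μ^(2*k) * (((‖e j‖ + ‖f j‖) / A ^ k * (W / μ) ^ (2*k - j)) * j * (2*σ) * (2*W/μ) ^ (j+1)) := by
            ring
        _ = ((‖e j‖ + ‖f j‖) / A ^ k * W ^ (2*k - j) * (j:ℝ) * (2*σ) * (2*W)^(j+1)) / μ := harith
    · exact Filter.Tendsto.const_div_atTop tendsto_id _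
  have hsum := ((hL1.add hL2).add hL3).div_const 2
  rw [show ((1:ℂ) + 1 + 0)/2 = 1 by norm_num] at hsum
  exact Filter.Tendsto.congr' (Filter.EventuallyEq.symm hmain) hsum
end
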